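/- For every real number x ≥ 3, one has ∫_{2}^{x} θ(t) / (t · (log t)^2) dt ≤ ( ((x−1)/2)·log 2 ) / log x + 1. -/

import Mathlib

set_option maxRecDepth 8000

open Finset MeasureTheory intervalIntegral

/-- Chebyshev's first function `θ(x) := ∑_{p ≤ x} log p`. -/
noncomputable def chebyshevTheta (x : ℝ) : ℝ :=
  ∑ p ∈ Finset.filter Nat.Prime (Finset.range (⌊x⌋₊ + 1)), Real.log p

namespace ThetaAux

noncomputable def f (t : ℝ) : ℝ := chebyshevTheta t / (t * (Real.log t) ^ 2)

noncomputable def phi (t : ℝ) : ℝ := Real.log 2 / 2 * ((t - 1) / Real.log t)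

def pc (n : ℕ) : ℕ := (Finset.filter Nat.Prime (Finset.range (n + 1))).card

lemma theta_nonneg (x : ℝ) : 0 ≤ chebyshevTheta x := by
  apply Finset.sum_nonneg
  intro p hp
  have hp2 : 2 ≤ p := (Finset.mem_filter.mp hp).2.two_le
  exact Real.log_nonneg (by exact_mod_cast Nat.one_le_of_lt hp2)

lemma theta_mono : Monotone chebyshevTheta := by
  intro x y hxy
  apply Finset.sum_le_sum_of_subset_of_nonneg
  · apply Finset.filter_subset_filter
    exact Finset.range_subset_range.mpr (by have := Nat.floor_le_floor hxy; omega)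
  · intro p hp _
    have hp2 : 2 ≤ p := (Finset.mem_filter.mp hp).2.two_le
    exact Real.log_nonneg (by exact_mod_cast Nat.one_le_of_lt hp2)

lemma theta_nat (n : ℕ) : chebyshevTheta (n : ℝ) =
    ∑ p ∈ Finset.filter Nat.Prime (Finset.range (n + 1)), Real.log p := by
  simp [chebyshevTheta]

lemma theta_floor (t : ℝ) : chebyshevTheta t = chebyshevTheta (⌊t⌋₊ : ℝ) := by
  simp [chebyshevTheta]

lemma theta_primorial (n : ℕ) : chebyshevTheta (n : ℝ) = Real.log (primorial n) := by
  rw [theta_nat, primorial]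
  push_cast
  rw [Real.log_prod]
  intro p hp
  have hp2 : 2 ≤ p := (Finset.mem_filter.mp hp).2.two_le
  positivity

lemma theta_le (t : ℝ) (ht : 0 ≤ t) : chebyshevTheta t ≤ 2 * Real.log 2 * t := by
  rw [theta_floor, theta_primorial]
  have h1 : (primorial ⌊t⌋₊ : ℝ) ≤ (4 : ℝ) ^ (⌊t⌋₊ : ℕ) := by
    exact_mod_cast primorial_le_4_pow ⌊t⌋₊
  have h2 : Real.log (primorial ⌊t⌋₊) ≤ Real.log ((4:ℝ) ^ (⌊t⌋₊:ℕ)) := by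
    apply Real.log_le_log (by exact_mod_cast primorial_pos ⌊t⌋₊) h1
  refine h2.trans ?_
  rw [Real.log_pow, show (4:ℝ) = 2 ^ 2 by norm_num, Real.log_pow]
  push_cast
  have := Nat.floor_le ht
  nlinarith [Real.log_pos (by norm_num : (1:ℝ) < 2)]

lemma f_nonneg {t : ℝ} (ht : 0 ≤ t) : 0 ≤ f t := by
  apply div_nonneg (theta_nonneg t)
  positivity

lemma f_meas : Measurable f := by
  apply Measurable.div theta_mono.measurable
  exact (measurable_id.mul (Real.measurable_log.pow_const 2))

lemma denom_ge {t : ℝ} (ht : 2 ≤ t) : 2 * Real.log 2 ^ 2 ≤ t * Real.log t ^ 2 := by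
  have h2 : (0:ℝ) < Real.log 2 := Real.log_pos (by norm_num)
  have h3 : Real.log 2 ≤ Real.log t := Real.log_le_log (by norm_num) ht
  nlinarith

lemma f_integrable {a b : ℝ} (ha : 2 ≤ a) (hab : a ≤ b) :
    IntervalIntegrable f volume a b := by
  rw [intervalIntegrable_iff_integrableOn_Ioc_of_le hab]
  have hd : (0:ℝ) < 2 * Real.log 2 ^ 2 := by
    have := Real.log_pos (show (1:ℝ) < 2 by norm_num); positivity
  apply Integrable.mono' (integrable_const (chebyshevTheta b / (2 * Real.log 2 ^ 2)))
    f_meas.aestronglyMeasurable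
  rw [ae_restrict_iff' measurableSet_Ioc]
  apply ae_of_all
  intro t ht
  have ht2 : 2 ≤ t := ha.trans ht.1.le
  rw [Real.norm_of_nonneg (f_nonneg (by linarith))]
  apply div_le_div₀ (theta_nonneg b) (theta_mono ht.2) hd (denom_ge ht2)

lemma integral_inv_mul {a b : ℝ} (ha : 2 ≤ a) (hab : a ≤ b) (c : ℝ) :
    ∫ t in a..b, c / (t * Real.log t ^ 2) =
      c * (1 / Real.log a - 1 / Real.log b) := by
  have key : ∫ t in a..b, 1 / (t * Real.log t ^ 2) = 1 / Real.log a - 1 / Real.log b := by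
    have hderiv : ∀ t ∈ Set.uIcc a b, HasDerivAt (fun u => -(Real.log u)⁻¹)
        (1 / (t * Real.log t ^ 2)) t := by
      intro t ht
      rw [Set.uIcc_of_le hab] at ht
      have ht2 : 2 ≤ t := ha.trans ht.1
      have htpos : (0:ℝ) < t := by linarith
      have hlogpos : (0:ℝ) < Real.log t :=
        Real.log_pos (by linarith)
      have h1 : HasDerivAt Real.log t⁻¹ t := Real.hasDerivAt_log (ne_of_gt htpos)
      have h2 := (h1.inv (ne_of_gt hlogpos)).neg
      refine h2.congr_deriv ?_
      field_simp
    have hcont : IntervalIntegrable (fun t => 1 / (t * Real.log t ^ 2)) volume a b := by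
      apply ContinuousOn.intervalIntegrable
      apply ContinuousOn.div continuousOn_const
      · apply ContinuousOn.mul continuousOn_id
        apply ContinuousOn.pow
        apply Real.continuousOn_log.mono
        intro t ht
        rw [Set.uIcc_of_le hab] at ht
        have : (0:ℝ) < t := by have := ht.1; simp; linarith
        simpa using ne_of_gt this
      · intro t ht
        rw [Set.uIcc_of_le hab] at ht
        have ht2 : 2 ≤ t := ha.trans ht.1
        have hlogpos : (0:ℝ) < Real.log t := Real.log_pos (by linarith)
        positivity
    rw [integral_eq_sub_of_hasDerivAt hderiv hcont]
    ring
  calc ∫ t in a..b, c / (t * Real.log t ^ 2)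
      = ∫ t in a..b, c * (1 / (t * Real.log t ^ 2)) := by
        apply intervalIntegral.integral_congr; intro t _; ring
    _ = c * ∫ t in a..b, 1 / (t * Real.log t ^ 2) := intervalIntegral.integral_const_mul _ _
    _ = c * (1 / Real.log a - 1 / Real.log b) := by rw [key]

lemma integral_step (n : ℕ) (hn : 2 ≤ n) :
    ∫ t in (n:ℝ)..((n:ℝ)+1), f t =
      chebyshevTheta (n:ℝ) * (1 / Real.log n - 1 / Real.log ((n:ℝ)+1)) := by
  have hab : (n:ℝ) ≤ (n:ℝ) + 1 := by linarith
  have hcongr : ∫ t in (n:ℝ)..((n:ℝ)+1), f t =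
      ∫ t in (n:ℝ)..((n:ℝ)+1), chebyshevTheta (n:ℝ) / (t * Real.log t ^ 2) := by
    apply intervalIntegral.integral_congr_ae
    have hne : ∀ᵐ (t:ℝ), t ≠ (n:ℝ) + 1 := by
      simpa using (MeasureTheory.measure_eq_zero_iff_ae_notMem (μ := volume)).mp
        (Real.volume_singleton (a := (n:ℝ)+1))
    filter_upwards [hne] with t htne hmem
    rw [Set.uIoc_of_le hab] at hmem
    have hlt : t < (n:ℝ) + 1 := lt_of_le_of_ne hmem.2 htne
    have hfloor : ⌊t⌋₊ = n := by
      rw [Nat.floor_eq_iff (by push_cast at hmem ⊢; linarith [hmem.1])]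
      exact ⟨hmem.1.le, by push_cast; linarith⟩
    unfold f
    rw [theta_floor t, hfloor]
  rw [hcongr]
  exact integral_inv_mul (by exact_mod_cast hn) hab _

lemma pc_succ (n : ℕ) : pc (n+1) = pc n + (if Nat.Prime (n+1) then 1 else 0) := by
  unfold pc
  rw [Finset.range_add_one, Finset.filter_insert]
  split
  · rw [Finset.card_insert_of_notMem (by simp)]
  · simp

lemma theta_succ (n : ℕ) : chebyshevTheta ((n:ℝ)+1) =
    chebyshevTheta (n:ℝ) + (if Nat.Prime (n+1) then Real.log ((n:ℝ)+1) else 0) := by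
  have : ((n:ℝ)+1) = ((n+1:ℕ):ℝ) := by push_cast; ring
  rw [this, theta_nat, theta_nat, Finset.range_add_one, Finset.filter_insert]
  split
  · rw [Finset.sum_insert (by simp)]
    push_cast; ring
  · simp

lemma key_identity : ∀ N : ℕ, 2 ≤ N →
    ∫ t in (2:ℝ)..((N:ℝ)+1), f t = (pc N : ℝ) - chebyshevTheta (N:ℝ) / Real.log ((N:ℝ)+1) := by
  intro N hN
  induction N with
  | zero => omega
  | succ n ih =>
    rcases Nat.lt_or_ge n 2 with h2 | h2
    · -- base case : n = 1
      have hn1 : n = 1 := by omega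
      subst hn1
      have h := integral_step 2 (le_refl 2)
      have hθ2 : chebyshevTheta (2:ℝ) = Real.log 2 := by
        rw [show (2:ℝ) = ((2:ℕ):ℝ) by norm_num, theta_primorial,
          show primorial 2 = 2 by decide]
      have hpc : pc 2 = 1 := by decide
      have hlog2 : Real.log 2 ≠ 0 := ne_of_gt (Real.log_pos (by norm_num))
      have hlog3 : Real.log (3:ℝ) ≠ 0 := ne_of_gt (Real.log_pos (by norm_num))
      norm_num at h ⊢
      rw [h, hθ2, hpc]
      field_simp
      ring
    · -- inductive step, n ≥ 2
      have hn2R : (2:ℝ) ≤ (n:ℝ) := by exact_mod_cast h2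
      have i1 : IntervalIntegrable f volume 2 ((n:ℝ)+1) :=
        f_integrable (le_refl 2) (by linarith)
      have i2 : IntervalIntegrable f volume ((n:ℝ)+1) (((n:ℝ)+1)+1) :=
        f_integrable (by linarith) (by linarith)
      have hsplit := intervalIntegral.integral_add_adjacent_intervals i1 i2
      have hstep : ∫ t in ((n:ℝ)+1)..(((n:ℝ)+1)+1), f t =
          chebyshevTheta ((n:ℝ)+1) * (1 / Real.log ((n:ℝ)+1) - 1 / Real.log (((n:ℝ)+1)+1)) := by
        have h := integral_step (n+1) (by omega)
        push_cast at h
        exact h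
      have hn1R : (1:ℝ) < (n:ℝ) + 1 := by linarith
      have hlogn1 : Real.log ((n:ℝ)+1) ≠ 0 := ne_of_gt (Real.log_pos hn1R)
      have hlogn2 : Real.log (((n:ℝ)+1)+1) ≠ 0 := ne_of_gt (Real.log_pos (by linarith))
      have hgoalcast : ∫ t in (2:ℝ)..(((n+1:ℕ):ℝ)+1), f t =
          (∫ t in (2:ℝ)..((n:ℝ)+1), f t) + ∫ t in ((n:ℝ)+1)..(((n:ℝ)+1)+1), f t := by
        rw [hsplit]; norm_num
      rw [hgoalcast, ih h2, hstep, pc_succ]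
      have hthetacast : chebyshevTheta ((n+1:ℕ):ℝ) = chebyshevTheta ((n:ℝ)+1) := by
        norm_num
      rw [hthetacast, theta_succ]
      by_cases hp : Nat.Prime (n+1)
      · rw [if_pos hp, if_pos hp]
        push_cast
        field_simp
        ring
      · rw [if_neg hp, if_neg hp]
        push_cast
        field_simp
        ring
noncomputable def phi' (t : ℝ) : ℝ :=
  Real.log 2 / 2 * ((Real.log t - (t - 1) * t⁻¹) / Real.log t ^ 2)

lemma log_three_gt_one : (1:ℝ) < Real.log 3 := by
  rw [Real.lt_log_iff_exp_lt (by norm_num)]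
  calc Real.exp 1 < 2.7182818286 := Real.exp_one_lt_d9
    _ < 3 := by norm_num

lemma log_149_ge_five : (5:ℝ) ≤ Real.log 149 := by
  rw [Real.le_log_iff_exp_le (by norm_num)]
  have h1 : Real.exp (5:ℝ) = Real.exp 1 ^ (5:ℕ) := by
    rw [← Real.exp_nat_mul]; norm_num
  rw [h1]
  calc Real.exp 1 ^ (5:ℕ) ≤ 2.7182818286 ^ (5:ℕ) := by
        apply pow_le_pow_left₀ (Real.exp_pos 1).le Real.exp_one_lt_d9.le
    _ ≤ 149 := by norm_num

lemma phi_hasDeriv {t : ℝ} (ht : 3 ≤ t) : HasDerivAt phi (phi' t) t := by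
  have htpos : (0:ℝ) < t := by linarith
  have hlogpos : (0:ℝ) < Real.log t := Real.log_pos (by linarith)
  have h1 : HasDerivAt (fun u : ℝ => u - 1) 1 t := (hasDerivAt_id t).sub_const 1
  have h2 : HasDerivAt Real.log t⁻¹ t := Real.hasDerivAt_log (ne_of_gt htpos)
  have h3 := h1.div h2 (ne_of_gt hlogpos)
  have h4 := h3.const_mul (Real.log 2 / 2)
  refine h4.congr_deriv ?_
  unfold phi'
  ring

lemma phi'_nonneg {t : ℝ} (ht : 3 ≤ t) : 0 ≤ phi' t := by
  have htpos : (0:ℝ) < t := by linarith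
  have hlog1 : (1:ℝ) ≤ Real.log t := by
    calc (1:ℝ) ≤ Real.log 3 := log_three_gt_one.le
      _ ≤ Real.log t := Real.log_le_log (by norm_num) ht
  have hfrac : (t - 1) * t⁻¹ ≤ 1 := by
    rw [← div_eq_mul_inv, div_le_one htpos]; linarith
  have hlog2 : (0:ℝ) ≤ Real.log 2 := (Real.log_pos (by norm_num)).le
  apply mul_nonneg (by linarith)
  apply div_nonneg (by linarith)
  positivity

lemma phi'_contOn {a b : ℝ} (ha : 3 ≤ a) (hab : a ≤ b) :
    ContinuousOn phi' (Set.uIcc a b) := by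
  rw [Set.uIcc_of_le hab]
  have hmem : ∀ t ∈ Set.Icc a b, (3:ℝ) ≤ t := fun t htm => ha.trans htm.1
  unfold phi'
  apply ContinuousOn.mul continuousOn_const
  apply ContinuousOn.div
  · apply ContinuousOn.sub
    · apply Real.continuousOn_log.mono
      intro t htm
      simp only [Set.mem_compl_iff, Set.mem_singleton_iff]
      have := hmem t htm; intro h; rw [h] at this; linarith
    · exact (continuousOn_id.sub continuousOn_const).mul
        (continuousOn_id.inv₀ (fun t htm => by
          simpa using (show (0:ℝ) < t by linarith [hmem t htm]).ne'))
  · exact (Real.continuousOn_log.mono (fun t htm => by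
      simp only [Set.mem_compl_iff, Set.mem_singleton_iff]
      have := hmem t htm; intro h; rw [h] at this; linarith)).pow 2
  · intro t htm
    have h3 : (3:ℝ) ≤ t := hmem t htm
    have : (0:ℝ) < Real.log t := Real.log_pos (by linarith)
    positivity

lemma phi_mono {u v : ℝ} (hu : 3 ≤ u) (huv : u ≤ v) : phi u ≤ phi v := by
  have hderiv : ∀ t ∈ Set.uIcc u v, HasDerivAt phi (phi' t) t := by
    intro t htm
    rw [Set.uIcc_of_le huv] at htm
    exact phi_hasDeriv (by linarith [htm.1])
  have hint : IntervalIntegrable phi' volume u v :=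
    (phi'_contOn hu huv).intervalIntegrable
  have hftc := integral_eq_sub_of_hasDerivAt hderiv hint
  have hnn : 0 ≤ ∫ t in u..v, phi' t := by
    apply intervalIntegral.integral_nonneg huv
    intro t htm
    exact phi'_nonneg (by linarith [htm.1])
  linarith [hftc ▸ hnn]

lemma f_le_phi' {t : ℝ} (ht : (149:ℝ) ≤ t) : f t ≤ phi' t := by
  have htpos : (0:ℝ) < t := by linarith
  have hlogt : (5:ℝ) ≤ Real.log t :=
    log_149_ge_five.trans (Real.log_le_log (by norm_num) ht)
  have hlog2 : (0:ℝ) < Real.log 2 := Real.log_pos (by norm_num)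
  have hD : (0:ℝ) < t * Real.log t ^ 2 := by positivity
  have h1 : f t ≤ 2 * Real.log 2 / Real.log t ^ 2 := by
    unfold f
    have hθ : chebyshevTheta t ≤ 2 * Real.log 2 * t := theta_le t (by linarith)
    calc chebyshevTheta t / (t * Real.log t ^ 2)
        ≤ (2 * Real.log 2 * t) / (t * Real.log t ^ 2) := by gcongr
        _ = 2 * Real.log 2 / Real.log t ^ 2 := by
          field_simp
  refine h1.trans ?_
  have hfrac : (t - 1) * t⁻¹ ≤ 1 := by
    rw [← div_eq_mul_inv, div_le_one htpos]; linarith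
  have h4 : (4:ℝ) ≤ Real.log t - (t - 1) * t⁻¹ := by linarith
  have : 2 * Real.log 2 / Real.log t ^ 2 = Real.log 2 / 2 * (4 / Real.log t ^ 2) := by
    ring
  rw [this]
  unfold phi'
  gcongr

lemma numeric_helper (N c P mθ mb mc : ℕ) (hN : 3 ≤ N)
    (hc : pc N = c) (hP : primorial N = P)
    (h1 : 2 ^ mθ ≤ P ^ 16) (h2 : (N + 1) ^ 128 ≤ 2 ^ mb) (h3 : N ^ 128 ≤ 2 ^ mc)
    (hmb : 0 < mb) (hmc : 0 < mc)
    (hq : c * (16 * mb * (2 * mc)) ≤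
      mθ * 128 * (2 * mc) + (N - 1) * (128 * (16 * mb)) + 16 * mb * (2 * mc)) :
    (pc N : ℝ) - chebyshevTheta (N : ℝ) / Real.log ((N : ℝ) + 1) ≤ phi (N : ℝ) + 1 := by
  have hlog2 : (0:ℝ) < Real.log 2 := Real.log_pos (by norm_num)
  have hNR : (3:ℝ) ≤ (N:ℝ) := by exact_mod_cast hN
  have hlogN : (0:ℝ) < Real.log (N:ℝ) := Real.log_pos (by linarith)
  have hlogN1 : (0:ℝ) < Real.log ((N:ℝ)+1) := Real.log_pos (by linarith)
  have hPpos : (0:ℝ) < (P:ℝ) := by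
    have := primorial_pos N; rw [hP] at this; exact_mod_cast this
  have hP1 : 1 ≤ P := by
    have := primorial_pos N; omega
  have hlogP : (0:ℝ) ≤ Real.log (P:ℝ) := by
    apply Real.log_nonneg
    exact_mod_cast hP1
  -- lower bound for theta
  have hθeq : chebyshevTheta (N:ℝ) = Real.log (P:ℝ) := by
    rw [theta_primorial, hP]
  have hA : (mθ:ℝ) * Real.log 2 ≤ 16 * Real.log (P:ℝ) := by
    have h1R : ((2:ℝ)) ^ mθ ≤ ((P:ℝ)) ^ (16:ℕ) := by exact_mod_cast h1
    have := Real.log_le_log (by positivity) h1R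
    rw [Real.log_pow, Real.log_pow] at this
    push_cast at this
    linarith
  have hB : 128 * Real.log ((N:ℝ)+1) ≤ (mb:ℝ) * Real.log 2 := by
    have h2R : (((N:ℝ))+1) ^ (128:ℕ) ≤ ((2:ℝ)) ^ mb := by exact_mod_cast h2
    have := Real.log_le_log (by positivity) h2R
    rw [Real.log_pow, Real.log_pow] at this
    push_cast at this
    linarith
  have hC : 128 * Real.log (N:ℝ) ≤ (mc:ℝ) * Real.log 2 := by
    have h3R : ((N:ℝ)) ^ (128:ℕ) ≤ ((2:ℝ)) ^ mc := by exact_mod_cast h3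
    have := Real.log_le_log (by positivity) h3R
    rw [Real.log_pow, Real.log_pow] at this
    push_cast at this
    linarith
  have hmbR : (0:ℝ) < (mb:ℝ) := by exact_mod_cast hmb
  have hmcR : (0:ℝ) < (mc:ℝ) := by exact_mod_cast hmc
  -- key1 : (mθ*128)/(16*mb) ≤ log P / log (N+1)
  have key1 : ((mθ:ℝ) * 128) / (16 * mb) ≤ Real.log (P:ℝ) / Real.log ((N:ℝ)+1) := by
    rw [div_le_div_iff₀ (by positivity) hlogN1]
    calc (mθ:ℝ) * 128 * Real.log ((N:ℝ)+1)
        = (mθ:ℝ) * (128 * Real.log ((N:ℝ)+1)) := by ring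
      _ ≤ (mθ:ℝ) * ((mb:ℝ) * Real.log 2) :=
          mul_le_mul_of_nonneg_left hB (by positivity)
      _ = (mb:ℝ) * ((mθ:ℝ) * Real.log 2) := by ring
      _ ≤ (mb:ℝ) * (16 * Real.log (P:ℝ)) :=
          mul_le_mul_of_nonneg_left hA (by positivity)
      _ = Real.log (P:ℝ) * (16 * (mb:ℝ)) := by ring
  -- key2 : (N-1)*128/(2*mc) ≤ phi N
  have key2 : (((N:ℝ) - 1) * 128) / (2 * mc) ≤ phi (N:ℝ) := by
    have ephi : phi (N:ℝ) = (Real.log 2 * ((N:ℝ) - 1)) / (2 * Real.log (N:ℝ)) := by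
      unfold phi; ring
    rw [ephi, div_le_div_iff₀ (by positivity) (by positivity)]
    calc ((N:ℝ) - 1) * 128 * (2 * Real.log (N:ℝ))
        = ((N:ℝ) - 1) * (2 * (128 * Real.log (N:ℝ))) := by ring
      _ ≤ ((N:ℝ) - 1) * (2 * ((mc:ℝ) * Real.log 2)) := by
          apply mul_le_mul_of_nonneg_left ?_ (by linarith)
          linarith [hC]
      _ = Real.log 2 * ((N:ℝ) - 1) * (2 * (mc:ℝ)) := by ring
  -- cast the rational certificate
  have hqR : (c:ℝ) * (16 * mb * (2 * mc)) ≤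
      (mθ:ℝ) * 128 * (2 * mc) + ((N:ℝ) - 1) * (128 * (16 * mb)) + 16 * mb * (2 * mc) := by
    have := (Nat.cast_le (α := ℝ)).mpr hq
    push_cast [Nat.cast_sub (show 1 ≤ N by omega)] at this
    convert this using 2 <;> push_cast <;> ring
  have mid : (c:ℝ) - ((mθ:ℝ) * 128) / (16 * mb) ≤ (((N:ℝ) - 1) * 128) / (2 * mc) + 1 := by
    have e1 : (c:ℝ) - ((mθ:ℝ) * 128) / (16 * mb) =
        ((c:ℝ) * (16 * mb) - (mθ:ℝ) * 128) / (16 * mb) := by field_simp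
    have e2 : (((N:ℝ) - 1) * 128) / (2 * mc) + 1 =
        (((N:ℝ) - 1) * 128 + 2 * mc) / (2 * mc) := by field_simp
    rw [e1, e2, div_le_div_iff₀ (by positivity) (by positivity)]
    ring_nf at hqR ⊢
    linarith [hqR]
  rw [hc, hθeq]
  have final : (c:ℝ) - Real.log (P:ℝ) / Real.log ((N:ℝ)+1) ≤
      (c:ℝ) - ((mθ:ℝ) * 128) / (16 * mb) := by linarith [key1]
  linarith [final, mid, key2]

lemma primorial_step_p {n : ℕ} (h : Nat.Prime (n+1)) : primorial (n+1) = primorial n * (n+1) := by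
  unfold primorial
  rw [Finset.range_add_one, Finset.filter_insert, if_pos h, Finset.prod_insert (by simp)]
  ring

lemma primorial_step_np {n : ℕ} (h : ¬ Nat.Prime (n+1)) : primorial (n+1) = primorial n := by
  unfold primorial
  rw [Finset.range_add_one, Finset.filter_insert, if_neg h]

lemma pc_step_p {n : ℕ} (h : Nat.Prime (n+1)) : pc (n+1) = pc n + 1 := by
  rw [pc_succ, if_pos h]

lemma pc_step_np {n : ℕ} (h : ¬ Nat.Prime (n+1)) : pc (n+1) = pc n := by
  rw [pc_succ, if_neg h]; ring

lemma pr0 : primorial 0 = 1 := by decide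
lemma pc0 : pc 0 = 0 := by decide
lemma pr1 : primorial 1 = 1 := by rw [show (1:ℕ) = 0+1 from rfl, primorial_step_np (by norm_num), pr0]
lemma pc1 : pc 1 = 0 := by rw [show (1:ℕ) = 0+1 from rfl, pc_step_np (by norm_num), pc0]
lemma pr2 : primorial 2 = 2 := by rw [show (2:ℕ) = 1+1 from rfl, primorial_step_p (by norm_num), pr1]
lemma pc2 : pc 2 = 1 := by rw [show (2:ℕ) = 1+1 from rfl, pc_step_p (by norm_num), pc1]
lemma pr3 : primorial 3 = 6 := by rw [show (3:ℕ) = 2+1 from rfl, primorial_step_p (by norm_num), pr2]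
lemma pc3 : pc 3 = 2 := by rw [show (3:ℕ) = 2+1 from rfl, pc_step_p (by norm_num), pc2]
lemma pr4 : primorial 4 = 6 := by rw [show (4:ℕ) = 3+1 from rfl, primorial_step_np (by norm_num), pr3]
lemma pc4 : pc 4 = 2 := by rw [show (4:ℕ) = 3+1 from rfl, pc_step_np (by norm_num), pc3]
lemma pr5 : primorial 5 = 30 := by rw [show (5:ℕ) = 4+1 from rfl, primorial_step_p (by norm_num), pr4]
lemma pc5 : pc 5 = 3 := by rw [show (5:ℕ) = 4+1 from rfl, pc_step_p (by norm_num), pc4]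
lemma pr6 : primorial 6 = 30 := by rw [show (6:ℕ) = 5+1 from rfl, primorial_step_np (by norm_num), pr5]
lemma pc6 : pc 6 = 3 := by rw [show (6:ℕ) = 5+1 from rfl, pc_step_np (by norm_num), pc5]
lemma pr7 : primorial 7 = 210 := by rw [show (7:ℕ) = 6+1 from rfl, primorial_step_p (by norm_num), pr6]
lemma pc7 : pc 7 = 4 := by rw [show (7:ℕ) = 6+1 from rfl, pc_step_p (by norm_num), pc6]
lemma pr8 : primorial 8 = 210 := by rw [show (8:ℕ) = 7+1 from rfl, primorial_step_np (by norm_num), pr7]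
lemma pc8 : pc 8 = 4 := by rw [show (8:ℕ) = 7+1 from rfl, pc_step_np (by norm_num), pc7]
lemma pr9 : primorial 9 = 210 := by rw [show (9:ℕ) = 8+1 from rfl, primorial_step_np (by norm_num), pr8]
lemma pc9 : pc 9 = 4 := by rw [show (9:ℕ) = 8+1 from rfl, pc_step_np (by norm_num), pc8]
lemma pr10 : primorial 10 = 210 := by rw [show (10:ℕ) = 9+1 from rfl, primorial_step_np (by norm_num), pr9]
lemma pc10 : pc 10 = 4 := by rw [show (10:ℕ) = 9+1 from rfl, pc_step_np (by norm_num), pc9]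
lemma pr11 : primorial 11 = 2310 := by rw [show (11:ℕ) = 10+1 from rfl, primorial_step_p (by norm_num), pr10]
lemma pc11 : pc 11 = 5 := by rw [show (11:ℕ) = 10+1 from rfl, pc_step_p (by norm_num), pc10]
lemma pr12 : primorial 12 = 2310 := by rw [show (12:ℕ) = 11+1 from rfl, primorial_step_np (by norm_num), pr11]
lemma pc12 : pc 12 = 5 := by rw [show (12:ℕ) = 11+1 from rfl, pc_step_np (by norm_num), pc11]
lemma pr13 : primorial 13 = 30030 := by rw [show (13:ℕ) = 12+1 from rfl, primorial_step_p (by norm_num), pr12]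
lemma pc13 : pc 13 = 6 := by rw [show (13:ℕ) = 12+1 from rfl, pc_step_p (by norm_num), pc12]
lemma pr14 : primorial 14 = 30030 := by rw [show (14:ℕ) = 13+1 from rfl, primorial_step_np (by norm_num), pr13]
lemma pc14 : pc 14 = 6 := by rw [show (14:ℕ) = 13+1 from rfl, pc_step_np (by norm_num), pc13]
lemma pr15 : primorial 15 = 30030 := by rw [show (15:ℕ) = 14+1 from rfl, primorial_step_np (by norm_num), pr14]
lemma pc15 : pc 15 = 6 := by rw [show (15:ℕ) = 14+1 from rfl, pc_step_np (by norm_num), pc14]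
lemma pr16 : primorial 16 = 30030 := by rw [show (16:ℕ) = 15+1 from rfl, primorial_step_np (by norm_num), pr15]
lemma pc16 : pc 16 = 6 := by rw [show (16:ℕ) = 15+1 from rfl, pc_step_np (by norm_num), pc15]
lemma pr17 : primorial 17 = 510510 := by rw [show (17:ℕ) = 16+1 from rfl, primorial_step_p (by norm_num), pr16]
lemma pc17 : pc 17 = 7 := by rw [show (17:ℕ) = 16+1 from rfl, pc_step_p (by norm_num), pc16]
lemma pr18 : primorial 18 = 510510 := by rw [show (18:ℕ) = 17+1 from rfl, primorial_step_np (by norm_num), pr17]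
lemma pc18 : pc 18 = 7 := by rw [show (18:ℕ) = 17+1 from rfl, pc_step_np (by norm_num), pc17]
lemma pr19 : primorial 19 = 9699690 := by rw [show (19:ℕ) = 18+1 from rfl, primorial_step_p (by norm_num), pr18]
lemma pc19 : pc 19 = 8 := by rw [show (19:ℕ) = 18+1 from rfl, pc_step_p (by norm_num), pc18]
lemma pr20 : primorial 20 = 9699690 := by rw [show (20:ℕ) = 19+1 from rfl, primorial_step_np (by norm_num), pr19]
lemma pc20 : pc 20 = 8 := by rw [show (20:ℕ) = 19+1 from rfl, pc_step_np (by norm_num), pc19]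
lemma pr21 : primorial 21 = 9699690 := by rw [show (21:ℕ) = 20+1 from rfl, primorial_step_np (by norm_num), pr20]
lemma pc21 : pc 21 = 8 := by rw [show (21:ℕ) = 20+1 from rfl, pc_step_np (by norm_num), pc20]
lemma pr22 : primorial 22 = 9699690 := by rw [show (22:ℕ) = 21+1 from rfl, primorial_step_np (by norm_num), pr21]
lemma pc22 : pc 22 = 8 := by rw [show (22:ℕ) = 21+1 from rfl, pc_step_np (by norm_num), pc21]
lemma pr23 : primorial 23 = 223092870 := by rw [show (23:ℕ) = 22+1 from rfl, primorial_step_p (by norm_num), pr22]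
lemma pc23 : pc 23 = 9 := by rw [show (23:ℕ) = 22+1 from rfl, pc_step_p (by norm_num), pc22]
lemma pr24 : primorial 24 = 223092870 := by rw [show (24:ℕ) = 23+1 from rfl, primorial_step_np (by norm_num), pr23]
lemma pc24 : pc 24 = 9 := by rw [show (24:ℕ) = 23+1 from rfl, pc_step_np (by norm_num), pc23]
lemma pr25 : primorial 25 = 223092870 := by rw [show (25:ℕ) = 24+1 from rfl, primorial_step_np (by norm_num), pr24]
lemma pc25 : pc 25 = 9 := by rw [show (25:ℕ) = 24+1 from rfl, pc_step_np (by norm_num), pc24]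
lemma pr26 : primorial 26 = 223092870 := by rw [show (26:ℕ) = 25+1 from rfl, primorial_step_np (by norm_num), pr25]
lemma pc26 : pc 26 = 9 := by rw [show (26:ℕ) = 25+1 from rfl, pc_step_np (by norm_num), pc25]
lemma pr27 : primorial 27 = 223092870 := by rw [show (27:ℕ) = 26+1 from rfl, primorial_step_np (by norm_num), pr26]
lemma pc27 : pc 27 = 9 := by rw [show (27:ℕ) = 26+1 from rfl, pc_step_np (by norm_num), pc26]
lemma pr28 : primorial 28 = 223092870 := by rw [show (28:ℕ) = 27+1 from rfl, primorial_step_np (by norm_num), pr27]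
lemma pc28 : pc 28 = 9 := by rw [show (28:ℕ) = 27+1 from rfl, pc_step_np (by norm_num), pc27]
lemma pr29 : primorial 29 = 6469693230 := by rw [show (29:ℕ) = 28+1 from rfl, primorial_step_p (by norm_num), pr28]
lemma pc29 : pc 29 = 10 := by rw [show (29:ℕ) = 28+1 from rfl, pc_step_p (by norm_num), pc28]
lemma pr30 : primorial 30 = 6469693230 := by rw [show (30:ℕ) = 29+1 from rfl, primorial_step_np (by norm_num), pr29]
lemma pc30 : pc 30 = 10 := by rw [show (30:ℕ) = 29+1 from rfl, pc_step_np (by norm_num), pc29]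
lemma pr31 : primorial 31 = 200560490130 := by rw [show (31:ℕ) = 30+1 from rfl, primorial_step_p (by norm_num), pr30]
lemma pc31 : pc 31 = 11 := by rw [show (31:ℕ) = 30+1 from rfl, pc_step_p (by norm_num), pc30]
lemma pr32 : primorial 32 = 200560490130 := by rw [show (32:ℕ) = 31+1 from rfl, primorial_step_np (by norm_num), pr31]
lemma pc32 : pc 32 = 11 := by rw [show (32:ℕ) = 31+1 from rfl, pc_step_np (by norm_num), pc31]
lemma pr33 : primorial 33 = 200560490130 := by rw [show (33:ℕ) = 32+1 from rfl, primorial_step_np (by norm_num), pr32]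
lemma pc33 : pc 33 = 11 := by rw [show (33:ℕ) = 32+1 from rfl, pc_step_np (by norm_num), pc32]
lemma pr34 : primorial 34 = 200560490130 := by rw [show (34:ℕ) = 33+1 from rfl, primorial_step_np (by norm_num), pr33]
lemma pc34 : pc 34 = 11 := by rw [show (34:ℕ) = 33+1 from rfl, pc_step_np (by norm_num), pc33]
lemma pr35 : primorial 35 = 200560490130 := by rw [show (35:ℕ) = 34+1 from rfl, primorial_step_np (by norm_num), pr34]
lemma pc35 : pc 35 = 11 := by rw [show (35:ℕ) = 34+1 from rfl, pc_step_np (by norm_num), pc34]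
lemma pr36 : primorial 36 = 200560490130 := by rw [show (36:ℕ) = 35+1 from rfl, primorial_step_np (by norm_num), pr35]
lemma pc36 : pc 36 = 11 := by rw [show (36:ℕ) = 35+1 from rfl, pc_step_np (by norm_num), pc35]
lemma pr37 : primorial 37 = 7420738134810 := by rw [show (37:ℕ) = 36+1 from rfl, primorial_step_p (by norm_num), pr36]
lemma pc37 : pc 37 = 12 := by rw [show (37:ℕ) = 36+1 from rfl, pc_step_p (by norm_num), pc36]
lemma pr38 : primorial 38 = 7420738134810 := by rw [show (38:ℕ) = 37+1 from rfl, primorial_step_np (by norm_num), pr37]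
lemma pc38 : pc 38 = 12 := by rw [show (38:ℕ) = 37+1 from rfl, pc_step_np (by norm_num), pc37]
lemma pr39 : primorial 39 = 7420738134810 := by rw [show (39:ℕ) = 38+1 from rfl, primorial_step_np (by norm_num), pr38]
lemma pc39 : pc 39 = 12 := by rw [show (39:ℕ) = 38+1 from rfl, pc_step_np (by norm_num), pc38]
lemma pr40 : primorial 40 = 7420738134810 := by rw [show (40:ℕ) = 39+1 from rfl, primorial_step_np (by norm_num), pr39]
lemma pc40 : pc 40 = 12 := by rw [show (40:ℕ) = 39+1 from rfl, pc_step_np (by norm_num), pc39]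
lemma pr41 : primorial 41 = 304250263527210 := by rw [show (41:ℕ) = 40+1 from rfl, primorial_step_p (by norm_num), pr40]
lemma pc41 : pc 41 = 13 := by rw [show (41:ℕ) = 40+1 from rfl, pc_step_p (by norm_num), pc40]
lemma pr42 : primorial 42 = 304250263527210 := by rw [show (42:ℕ) = 41+1 from rfl, primorial_step_np (by norm_num), pr41]
lemma pc42 : pc 42 = 13 := by rw [show (42:ℕ) = 41+1 from rfl, pc_step_np (by norm_num), pc41]
lemma pr43 : primorial 43 = 13082761331670030 := by rw [show (43:ℕ) = 42+1 from rfl, primorial_step_p (by norm_num), pr42]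
lemma pc43 : pc 43 = 14 := by rw [show (43:ℕ) = 42+1 from rfl, pc_step_p (by norm_num), pc42]
lemma pr44 : primorial 44 = 13082761331670030 := by rw [show (44:ℕ) = 43+1 from rfl, primorial_step_np (by norm_num), pr43]
lemma pc44 : pc 44 = 14 := by rw [show (44:ℕ) = 43+1 from rfl, pc_step_np (by norm_num), pc43]
lemma pr45 : primorial 45 = 13082761331670030 := by rw [show (45:ℕ) = 44+1 from rfl, primorial_step_np (by norm_num), pr44]
lemma pc45 : pc 45 = 14 := by rw [show (45:ℕ) = 44+1 from rfl, pc_step_np (by norm_num), pc44]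
lemma pr46 : primorial 46 = 13082761331670030 := by rw [show (46:ℕ) = 45+1 from rfl, primorial_step_np (by norm_num), pr45]
lemma pc46 : pc 46 = 14 := by rw [show (46:ℕ) = 45+1 from rfl, pc_step_np (by norm_num), pc45]
lemma pr47 : primorial 47 = 614889782588491410 := by rw [show (47:ℕ) = 46+1 from rfl, primorial_step_p (by norm_num), pr46]
lemma pc47 : pc 47 = 15 := by rw [show (47:ℕ) = 46+1 from rfl, pc_step_p (by norm_num), pc46]
lemma pr48 : primorial 48 = 614889782588491410 := by rw [show (48:ℕ) = 47+1 from rfl, primorial_step_np (by norm_num), pr47]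
lemma pc48 : pc 48 = 15 := by rw [show (48:ℕ) = 47+1 from rfl, pc_step_np (by norm_num), pc47]
lemma pr49 : primorial 49 = 614889782588491410 := by rw [show (49:ℕ) = 48+1 from rfl, primorial_step_np (by norm_num), pr48]
lemma pc49 : pc 49 = 15 := by rw [show (49:ℕ) = 48+1 from rfl, pc_step_np (by norm_num), pc48]
lemma pr50 : primorial 50 = 614889782588491410 := by rw [show (50:ℕ) = 49+1 from rfl, primorial_step_np (by norm_num), pr49]
lemma pc50 : pc 50 = 15 := by rw [show (50:ℕ) = 49+1 from rfl, pc_step_np (by norm_num), pc49]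
lemma pr51 : primorial 51 = 614889782588491410 := by rw [show (51:ℕ) = 50+1 from rfl, primorial_step_np (by norm_num), pr50]
lemma pc51 : pc 51 = 15 := by rw [show (51:ℕ) = 50+1 from rfl, pc_step_np (by norm_num), pc50]
lemma pr52 : primorial 52 = 614889782588491410 := by rw [show (52:ℕ) = 51+1 from rfl, primorial_step_np (by norm_num), pr51]
lemma pc52 : pc 52 = 15 := by rw [show (52:ℕ) = 51+1 from rfl, pc_step_np (by norm_num), pc51]
lemma pr53 : primorial 53 = 32589158477190044730 := by rw [show (53:ℕ) = 52+1 from rfl, primorial_step_p (by norm_num), pr52]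
lemma pc53 : pc 53 = 16 := by rw [show (53:ℕ) = 52+1 from rfl, pc_step_p (by norm_num), pc52]
lemma pr54 : primorial 54 = 32589158477190044730 := by rw [show (54:ℕ) = 53+1 from rfl, primorial_step_np (by norm_num), pr53]
lemma pc54 : pc 54 = 16 := by rw [show (54:ℕ) = 53+1 from rfl, pc_step_np (by norm_num), pc53]
lemma pr55 : primorial 55 = 32589158477190044730 := by rw [show (55:ℕ) = 54+1 from rfl, primorial_step_np (by norm_num), pr54]
lemma pc55 : pc 55 = 16 := by rw [show (55:ℕ) = 54+1 from rfl, pc_step_np (by norm_num), pc54]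
lemma pr56 : primorial 56 = 32589158477190044730 := by rw [show (56:ℕ) = 55+1 from rfl, primorial_step_np (by norm_num), pr55]
lemma pc56 : pc 56 = 16 := by rw [show (56:ℕ) = 55+1 from rfl, pc_step_np (by norm_num), pc55]
lemma pr57 : primorial 57 = 32589158477190044730 := by rw [show (57:ℕ) = 56+1 from rfl, primorial_step_np (by norm_num), pr56]
lemma pc57 : pc 57 = 16 := by rw [show (57:ℕ) = 56+1 from rfl, pc_step_np (by norm_num), pc56]
lemma pr58 : primorial 58 = 32589158477190044730 := by rw [show (58:ℕ) = 57+1 from rfl, primorial_step_np (by norm_num), pr57]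
lemma pc58 : pc 58 = 16 := by rw [show (58:ℕ) = 57+1 from rfl, pc_step_np (by norm_num), pc57]
lemma pr59 : primorial 59 = 1922760350154212639070 := by rw [show (59:ℕ) = 58+1 from rfl, primorial_step_p (by norm_num), pr58]
lemma pc59 : pc 59 = 17 := by rw [show (59:ℕ) = 58+1 from rfl, pc_step_p (by norm_num), pc58]
lemma pr60 : primorial 60 = 1922760350154212639070 := by rw [show (60:ℕ) = 59+1 from rfl, primorial_step_np (by norm_num), pr59]
lemma pc60 : pc 60 = 17 := by rw [show (60:ℕ) = 59+1 from rfl, pc_step_np (by norm_num), pc59]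
lemma pr61 : primorial 61 = 117288381359406970983270 := by rw [show (61:ℕ) = 60+1 from rfl, primorial_step_p (by norm_num), pr60]
lemma pc61 : pc 61 = 18 := by rw [show (61:ℕ) = 60+1 from rfl, pc_step_p (by norm_num), pc60]
lemma pr62 : primorial 62 = 117288381359406970983270 := by rw [show (62:ℕ) = 61+1 from rfl, primorial_step_np (by norm_num), pr61]
lemma pc62 : pc 62 = 18 := by rw [show (62:ℕ) = 61+1 from rfl, pc_step_np (by norm_num), pc61]
lemma pr63 : primorial 63 = 117288381359406970983270 := by rw [show (63:ℕ) = 62+1 from rfl, primorial_step_np (by norm_num), pr62]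
lemma pc63 : pc 63 = 18 := by rw [show (63:ℕ) = 62+1 from rfl, pc_step_np (by norm_num), pc62]
lemma pr64 : primorial 64 = 117288381359406970983270 := by rw [show (64:ℕ) = 63+1 from rfl, primorial_step_np (by norm_num), pr63]
lemma pc64 : pc 64 = 18 := by rw [show (64:ℕ) = 63+1 from rfl, pc_step_np (by norm_num), pc63]
lemma pr65 : primorial 65 = 117288381359406970983270 := by rw [show (65:ℕ) = 64+1 from rfl, primorial_step_np (by norm_num), pr64]
lemma pc65 : pc 65 = 18 := by rw [show (65:ℕ) = 64+1 from rfl, pc_step_np (by norm_num), pc64]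
lemma pr66 : primorial 66 = 117288381359406970983270 := by rw [show (66:ℕ) = 65+1 from rfl, primorial_step_np (by norm_num), pr65]
lemma pc66 : pc 66 = 18 := by rw [show (66:ℕ) = 65+1 from rfl, pc_step_np (by norm_num), pc65]
lemma pr67 : primorial 67 = 7858321551080267055879090 := by rw [show (67:ℕ) = 66+1 from rfl, primorial_step_p (by norm_num), pr66]
lemma pc67 : pc 67 = 19 := by rw [show (67:ℕ) = 66+1 from rfl, pc_step_p (by norm_num), pc66]
lemma pr68 : primorial 68 = 7858321551080267055879090 := by rw [show (68:ℕ) = 67+1 from rfl, primorial_step_np (by norm_num), pr67]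
lemma pc68 : pc 68 = 19 := by rw [show (68:ℕ) = 67+1 from rfl, pc_step_np (by norm_num), pc67]
lemma pr69 : primorial 69 = 7858321551080267055879090 := by rw [show (69:ℕ) = 68+1 from rfl, primorial_step_np (by norm_num), pr68]
lemma pc69 : pc 69 = 19 := by rw [show (69:ℕ) = 68+1 from rfl, pc_step_np (by norm_num), pc68]
lemma pr70 : primorial 70 = 7858321551080267055879090 := by rw [show (70:ℕ) = 69+1 from rfl, primorial_step_np (by norm_num), pr69]
lemma pc70 : pc 70 = 19 := by rw [show (70:ℕ) = 69+1 from rfl, pc_step_np (by norm_num), pc69]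
lemma pr71 : primorial 71 = 557940830126698960967415390 := by rw [show (71:ℕ) = 70+1 from rfl, primorial_step_p (by norm_num), pr70]
lemma pc71 : pc 71 = 20 := by rw [show (71:ℕ) = 70+1 from rfl, pc_step_p (by norm_num), pc70]
lemma pr72 : primorial 72 = 557940830126698960967415390 := by rw [show (72:ℕ) = 71+1 from rfl, primorial_step_np (by norm_num), pr71]
lemma pc72 : pc 72 = 20 := by rw [show (72:ℕ) = 71+1 from rfl, pc_step_np (by norm_num), pc71]
lemma pr73 : primorial 73 = 40729680599249024150621323470 := by rw [show (73:ℕ) = 72+1 from rfl, primorial_step_p (by norm_num), pr72]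
lemma pc73 : pc 73 = 21 := by rw [show (73:ℕ) = 72+1 from rfl, pc_step_p (by norm_num), pc72]
lemma pr74 : primorial 74 = 40729680599249024150621323470 := by rw [show (74:ℕ) = 73+1 from rfl, primorial_step_np (by norm_num), pr73]
lemma pc74 : pc 74 = 21 := by rw [show (74:ℕ) = 73+1 from rfl, pc_step_np (by norm_num), pc73]
lemma pr75 : primorial 75 = 40729680599249024150621323470 := by rw [show (75:ℕ) = 74+1 from rfl, primorial_step_np (by norm_num), pr74]
lemma pc75 : pc 75 = 21 := by rw [show (75:ℕ) = 74+1 from rfl, pc_step_np (by norm_num), pc74]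
lemma pr76 : primorial 76 = 40729680599249024150621323470 := by rw [show (76:ℕ) = 75+1 from rfl, primorial_step_np (by norm_num), pr75]
lemma pc76 : pc 76 = 21 := by rw [show (76:ℕ) = 75+1 from rfl, pc_step_np (by norm_num), pc75]
lemma pr77 : primorial 77 = 40729680599249024150621323470 := by rw [show (77:ℕ) = 76+1 from rfl, primorial_step_np (by norm_num), pr76]
lemma pc77 : pc 77 = 21 := by rw [show (77:ℕ) = 76+1 from rfl, pc_step_np (by norm_num), pc76]
lemma pr78 : primorial 78 = 40729680599249024150621323470 := by rw [show (78:ℕ) = 77+1 from rfl, primorial_step_np (by norm_num), pr77]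
lemma pc78 : pc 78 = 21 := by rw [show (78:ℕ) = 77+1 from rfl, pc_step_np (by norm_num), pc77]
lemma pr79 : primorial 79 = 3217644767340672907899084554130 := by rw [show (79:ℕ) = 78+1 from rfl, primorial_step_p (by norm_num), pr78]
lemma pc79 : pc 79 = 22 := by rw [show (79:ℕ) = 78+1 from rfl, pc_step_p (by norm_num), pc78]
lemma pr80 : primorial 80 = 3217644767340672907899084554130 := by rw [show (80:ℕ) = 79+1 from rfl, primorial_step_np (by norm_num), pr79]
lemma pc80 : pc 80 = 22 := by rw [show (80:ℕ) = 79+1 from rfl, pc_step_np (by norm_num), pc79]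
lemma pr81 : primorial 81 = 3217644767340672907899084554130 := by rw [show (81:ℕ) = 80+1 from rfl, primorial_step_np (by norm_num), pr80]
lemma pc81 : pc 81 = 22 := by rw [show (81:ℕ) = 80+1 from rfl, pc_step_np (by norm_num), pc80]
lemma pr82 : primorial 82 = 3217644767340672907899084554130 := by rw [show (82:ℕ) = 81+1 from rfl, primorial_step_np (by norm_num), pr81]
lemma pc82 : pc 82 = 22 := by rw [show (82:ℕ) = 81+1 from rfl, pc_step_np (by norm_num), pc81]
lemma pr83 : primorial 83 = 267064515689275851355624017992790 := by rw [show (83:ℕ) = 82+1 from rfl, primorial_step_p (by norm_num), pr82]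
lemma pc83 : pc 83 = 23 := by rw [show (83:ℕ) = 82+1 from rfl, pc_step_p (by norm_num), pc82]
lemma pr84 : primorial 84 = 267064515689275851355624017992790 := by rw [show (84:ℕ) = 83+1 from rfl, primorial_step_np (by norm_num), pr83]
lemma pc84 : pc 84 = 23 := by rw [show (84:ℕ) = 83+1 from rfl, pc_step_np (by norm_num), pc83]
lemma pr85 : primorial 85 = 267064515689275851355624017992790 := by rw [show (85:ℕ) = 84+1 from rfl, primorial_step_np (by norm_num), pr84]
lemma pc85 : pc 85 = 23 := by rw [show (85:ℕ) = 84+1 from rfl, pc_step_np (by norm_num), pc84]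
lemma pr86 : primorial 86 = 267064515689275851355624017992790 := by rw [show (86:ℕ) = 85+1 from rfl, primorial_step_np (by norm_num), pr85]
lemma pc86 : pc 86 = 23 := by rw [show (86:ℕ) = 85+1 from rfl, pc_step_np (by norm_num), pc85]
lemma pr87 : primorial 87 = 267064515689275851355624017992790 := by rw [show (87:ℕ) = 86+1 from rfl, primorial_step_np (by norm_num), pr86]
lemma pc87 : pc 87 = 23 := by rw [show (87:ℕ) = 86+1 from rfl, pc_step_np (by norm_num), pc86]
lemma pr88 : primorial 88 = 267064515689275851355624017992790 := by rw [show (88:ℕ) = 87+1 from rfl, primorial_step_np (by norm_num), pr87]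
lemma pc88 : pc 88 = 23 := by rw [show (88:ℕ) = 87+1 from rfl, pc_step_np (by norm_num), pc87]
lemma pr89 : primorial 89 = 23768741896345550770650537601358310 := by rw [show (89:ℕ) = 88+1 from rfl, primorial_step_p (by norm_num), pr88]
lemma pc89 : pc 89 = 24 := by rw [show (89:ℕ) = 88+1 from rfl, pc_step_p (by norm_num), pc88]
lemma pr90 : primorial 90 = 23768741896345550770650537601358310 := by rw [show (90:ℕ) = 89+1 from rfl, primorial_step_np (by norm_num), pr89]
lemma pc90 : pc 90 = 24 := by rw [show (90:ℕ) = 89+1 from rfl, pc_step_np (by norm_num), pc89]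
lemma pr91 : primorial 91 = 23768741896345550770650537601358310 := by rw [show (91:ℕ) = 90+1 from rfl, primorial_step_np (by norm_num), pr90]
lemma pc91 : pc 91 = 24 := by rw [show (91:ℕ) = 90+1 from rfl, pc_step_np (by norm_num), pc90]
lemma pr92 : primorial 92 = 23768741896345550770650537601358310 := by rw [show (92:ℕ) = 91+1 from rfl, primorial_step_np (by norm_num), pr91]
lemma pc92 : pc 92 = 24 := by rw [show (92:ℕ) = 91+1 from rfl, pc_step_np (by norm_num), pc91]
lemma pr93 : primorial 93 = 23768741896345550770650537601358310 := by rw [show (93:ℕ) = 92+1 from rfl, primorial_step_np (by norm_num), pr92]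
lemma pc93 : pc 93 = 24 := by rw [show (93:ℕ) = 92+1 from rfl, pc_step_np (by norm_num), pc92]
lemma pr94 : primorial 94 = 23768741896345550770650537601358310 := by rw [show (94:ℕ) = 93+1 from rfl, primorial_step_np (by norm_num), pr93]
lemma pc94 : pc 94 = 24 := by rw [show (94:ℕ) = 93+1 from rfl, pc_step_np (by norm_num), pc93]
lemma pr95 : primorial 95 = 23768741896345550770650537601358310 := by rw [show (95:ℕ) = 94+1 from rfl, primorial_step_np (by norm_num), pr94]
lemma pc95 : pc 95 = 24 := by rw [show (95:ℕ) = 94+1 from rfl, pc_step_np (by norm_num), pc94]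
lemma pr96 : primorial 96 = 23768741896345550770650537601358310 := by rw [show (96:ℕ) = 95+1 from rfl, primorial_step_np (by norm_num), pr95]
lemma pc96 : pc 96 = 24 := by rw [show (96:ℕ) = 95+1 from rfl, pc_step_np (by norm_num), pc95]
lemma pr97 : primorial 97 = 2305567963945518424753102147331756070 := by rw [show (97:ℕ) = 96+1 from rfl, primorial_step_p (by norm_num), pr96]
lemma pc97 : pc 97 = 25 := by rw [show (97:ℕ) = 96+1 from rfl, pc_step_p (by norm_num), pc96]
lemma pr98 : primorial 98 = 2305567963945518424753102147331756070 := by rw [show (98:ℕ) = 97+1 from rfl, primorial_step_np (by norm_num), pr97]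
lemma pc98 : pc 98 = 25 := by rw [show (98:ℕ) = 97+1 from rfl, pc_step_np (by norm_num), pc97]
lemma pr99 : primorial 99 = 2305567963945518424753102147331756070 := by rw [show (99:ℕ) = 98+1 from rfl, primorial_step_np (by norm_num), pr98]
lemma pc99 : pc 99 = 25 := by rw [show (99:ℕ) = 98+1 from rfl, pc_step_np (by norm_num), pc98]
lemma pr100 : primorial 100 = 2305567963945518424753102147331756070 := by rw [show (100:ℕ) = 99+1 from rfl, primorial_step_np (by norm_num), pr99]
lemma pc100 : pc 100 = 25 := by rw [show (100:ℕ) = 99+1 from rfl, pc_step_np (by norm_num), pc99]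
lemma pr101 : primorial 101 = 232862364358497360900063316880507363070 := by rw [show (101:ℕ) = 100+1 from rfl, primorial_step_p (by norm_num), pr100]
lemma pc101 : pc 101 = 26 := by rw [show (101:ℕ) = 100+1 from rfl, pc_step_p (by norm_num), pc100]
lemma pr102 : primorial 102 = 232862364358497360900063316880507363070 := by rw [show (102:ℕ) = 101+1 from rfl, primorial_step_np (by norm_num), pr101]
lemma pc102 : pc 102 = 26 := by rw [show (102:ℕ) = 101+1 from rfl, pc_step_np (by norm_num), pc101]
lemma pr103 : primorial 103 = 23984823528925228172706521638692258396210 := by rw [show (103:ℕ) = 102+1 from rfl, primorial_step_p (by norm_num), pr102]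
lemma pc103 : pc 103 = 27 := by rw [show (103:ℕ) = 102+1 from rfl, pc_step_p (by norm_num), pc102]
lemma pr104 : primorial 104 = 23984823528925228172706521638692258396210 := by rw [show (104:ℕ) = 103+1 from rfl, primorial_step_np (by norm_num), pr103]
lemma pc104 : pc 104 = 27 := by rw [show (104:ℕ) = 103+1 from rfl, pc_step_np (by norm_num), pc103]
lemma pr105 : primorial 105 = 23984823528925228172706521638692258396210 := by rw [show (105:ℕ) = 104+1 from rfl, primorial_step_np (by norm_num), pr104]
lemma pc105 : pc 105 = 27 := by rw [show (105:ℕ) = 104+1 from rfl, pc_step_np (by norm_num), pc104]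
lemma pr106 : primorial 106 = 23984823528925228172706521638692258396210 := by rw [show (106:ℕ) = 105+1 from rfl, primorial_step_np (by norm_num), pr105]
lemma pc106 : pc 106 = 27 := by rw [show (106:ℕ) = 105+1 from rfl, pc_step_np (by norm_num), pc105]
lemma pr107 : primorial 107 = 2566376117594999414479597815340071648394470 := by rw [show (107:ℕ) = 106+1 from rfl, primorial_step_p (by norm_num), pr106]
lemma pc107 : pc 107 = 28 := by rw [show (107:ℕ) = 106+1 from rfl, pc_step_p (by norm_num), pc106]
lemma pr108 : primorial 108 = 2566376117594999414479597815340071648394470 := by rw [show (108:ℕ) = 107+1 from rfl, primorial_step_np (by norm_num), pr107]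
lemma pc108 : pc 108 = 28 := by rw [show (108:ℕ) = 107+1 from rfl, pc_step_np (by norm_num), pc107]
lemma pr109 : primorial 109 = 279734996817854936178276161872067809674997230 := by rw [show (109:ℕ) = 108+1 from rfl, primorial_step_p (by norm_num), pr108]
lemma pc109 : pc 109 = 29 := by rw [show (109:ℕ) = 108+1 from rfl, pc_step_p (by norm_num), pc108]
lemma pr110 : primorial 110 = 279734996817854936178276161872067809674997230 := by rw [show (110:ℕ) = 109+1 from rfl, primorial_step_np (by norm_num), pr109]
lemma pc110 : pc 110 = 29 := by rw [show (110:ℕ) = 109+1 from rfl, pc_step_np (by norm_num), pc109]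
lemma pr111 : primorial 111 = 279734996817854936178276161872067809674997230 := by rw [show (111:ℕ) = 110+1 from rfl, primorial_step_np (by norm_num), pr110]
lemma pc111 : pc 111 = 29 := by rw [show (111:ℕ) = 110+1 from rfl, pc_step_np (by norm_num), pc110]
lemma pr112 : primorial 112 = 279734996817854936178276161872067809674997230 := by rw [show (112:ℕ) = 111+1 from rfl, primorial_step_np (by norm_num), pr111]
lemma pc112 : pc 112 = 29 := by rw [show (112:ℕ) = 111+1 from rfl, pc_step_np (by norm_num), pc111]
lemma pr113 : primorial 113 = 31610054640417607788145206291543662493274686990 := by rw [show (113:ℕ) = 112+1 from rfl, primorial_step_p (by norm_num), pr112]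
lemma pc113 : pc 113 = 30 := by rw [show (113:ℕ) = 112+1 from rfl, pc_step_p (by norm_num), pc112]
lemma pr114 : primorial 114 = 31610054640417607788145206291543662493274686990 := by rw [show (114:ℕ) = 113+1 from rfl, primorial_step_np (by norm_num), pr113]
lemma pc114 : pc 114 = 30 := by rw [show (114:ℕ) = 113+1 from rfl, pc_step_np (by norm_num), pc113]
lemma pr115 : primorial 115 = 31610054640417607788145206291543662493274686990 := by rw [show (115:ℕ) = 114+1 from rfl, primorial_step_np (by norm_num), pr114]
lemma pc115 : pc 115 = 30 := by rw [show (115:ℕ) = 114+1 from rfl, pc_step_np (by norm_num), pc114]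
lemma pr116 : primorial 116 = 31610054640417607788145206291543662493274686990 := by rw [show (116:ℕ) = 115+1 from rfl, primorial_step_np (by norm_num), pr115]
lemma pc116 : pc 116 = 30 := by rw [show (116:ℕ) = 115+1 from rfl, pc_step_np (by norm_num), pc115]
lemma pr117 : primorial 117 = 31610054640417607788145206291543662493274686990 := by rw [show (117:ℕ) = 116+1 from rfl, primorial_step_np (by norm_num), pr116]
lemma pc117 : pc 117 = 30 := by rw [show (117:ℕ) = 116+1 from rfl, pc_step_np (by norm_num), pc116]
lemma pr118 : primorial 118 = 31610054640417607788145206291543662493274686990 := by rw [show (118:ℕ) = 117+1 from rfl, primorial_step_np (by norm_num), pr117]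
lemma pc118 : pc 118 = 30 := by rw [show (118:ℕ) = 117+1 from rfl, pc_step_np (by norm_num), pc117]
lemma pr119 : primorial 119 = 31610054640417607788145206291543662493274686990 := by rw [show (119:ℕ) = 118+1 from rfl, primorial_step_np (by norm_num), pr118]
lemma pc119 : pc 119 = 30 := by rw [show (119:ℕ) = 118+1 from rfl, pc_step_np (by norm_num), pc118]
lemma pr120 : primorial 120 = 31610054640417607788145206291543662493274686990 := by rw [show (120:ℕ) = 119+1 from rfl, primorial_step_np (by norm_num), pr119]
lemma pc120 : pc 120 = 30 := by rw [show (120:ℕ) = 119+1 from rfl, pc_step_np (by norm_num), pc119]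
lemma pr121 : primorial 121 = 31610054640417607788145206291543662493274686990 := by rw [show (121:ℕ) = 120+1 from rfl, primorial_step_np (by norm_num), pr120]
lemma pc121 : pc 121 = 30 := by rw [show (121:ℕ) = 120+1 from rfl, pc_step_np (by norm_num), pc120]
lemma pr122 : primorial 122 = 31610054640417607788145206291543662493274686990 := by rw [show (122:ℕ) = 121+1 from rfl, primorial_step_np (by norm_num), pr121]
lemma pc122 : pc 122 = 30 := by rw [show (122:ℕ) = 121+1 from rfl, pc_step_np (by norm_num), pc121]
lemma pr123 : primorial 123 = 31610054640417607788145206291543662493274686990 := by rw [show (123:ℕ) = 122+1 from rfl, primorial_step_np (by norm_num), pr122]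
lemma pc123 : pc 123 = 30 := by rw [show (123:ℕ) = 122+1 from rfl, pc_step_np (by norm_num), pc122]
lemma pr124 : primorial 124 = 31610054640417607788145206291543662493274686990 := by rw [show (124:ℕ) = 123+1 from rfl, primorial_step_np (by norm_num), pr123]
lemma pc124 : pc 124 = 30 := by rw [show (124:ℕ) = 123+1 from rfl, pc_step_np (by norm_num), pc123]
lemma pr125 : primorial 125 = 31610054640417607788145206291543662493274686990 := by rw [show (125:ℕ) = 124+1 from rfl, primorial_step_np (by norm_num), pr124]
lemma pc125 : pc 125 = 30 := by rw [show (125:ℕ) = 124+1 from rfl, pc_step_np (by norm_num), pc124]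
lemma pr126 : primorial 126 = 31610054640417607788145206291543662493274686990 := by rw [show (126:ℕ) = 125+1 from rfl, primorial_step_np (by norm_num), pr125]
lemma pc126 : pc 126 = 30 := by rw [show (126:ℕ) = 125+1 from rfl, pc_step_np (by norm_num), pc125]
lemma pr127 : primorial 127 = 4014476939333036189094441199026045136645885247730 := by rw [show (127:ℕ) = 126+1 from rfl, primorial_step_p (by norm_num), pr126]
lemma pc127 : pc 127 = 31 := by rw [show (127:ℕ) = 126+1 from rfl, pc_step_p (by norm_num), pc126]
lemma pr128 : primorial 128 = 4014476939333036189094441199026045136645885247730 := by rw [show (128:ℕ) = 127+1 from rfl, primorial_step_np (by norm_num), pr127]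
lemma pc128 : pc 128 = 31 := by rw [show (128:ℕ) = 127+1 from rfl, pc_step_np (by norm_num), pc127]
lemma pr129 : primorial 129 = 4014476939333036189094441199026045136645885247730 := by rw [show (129:ℕ) = 128+1 from rfl, primorial_step_np (by norm_num), pr128]
lemma pc129 : pc 129 = 31 := by rw [show (129:ℕ) = 128+1 from rfl, pc_step_np (by norm_num), pc128]
lemma pr130 : primorial 130 = 4014476939333036189094441199026045136645885247730 := by rw [show (130:ℕ) = 129+1 from rfl, primorial_step_np (by norm_num), pr129]
lemma pc130 : pc 130 = 31 := by rw [show (130:ℕ) = 129+1 from rfl, pc_step_np (by norm_num), pc129]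
lemma pr131 : primorial 131 = 525896479052627740771371797072411912900610967452630 := by rw [show (131:ℕ) = 130+1 from rfl, primorial_step_p (by norm_num), pr130]
lemma pc131 : pc 131 = 32 := by rw [show (131:ℕ) = 130+1 from rfl, pc_step_p (by norm_num), pc130]
lemma pr132 : primorial 132 = 525896479052627740771371797072411912900610967452630 := by rw [show (132:ℕ) = 131+1 from rfl, primorial_step_np (by norm_num), pr131]
lemma pc132 : pc 132 = 32 := by rw [show (132:ℕ) = 131+1 from rfl, pc_step_np (by norm_num), pc131]
lemma pr133 : primorial 133 = 525896479052627740771371797072411912900610967452630 := by rw [show (133:ℕ) = 132+1 from rfl, primorial_step_np (by norm_num), pr132]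
lemma pc133 : pc 133 = 32 := by rw [show (133:ℕ) = 132+1 from rfl, pc_step_np (by norm_num), pc132]
lemma pr134 : primorial 134 = 525896479052627740771371797072411912900610967452630 := by rw [show (134:ℕ) = 133+1 from rfl, primorial_step_np (by norm_num), pr133]
lemma pc134 : pc 134 = 32 := by rw [show (134:ℕ) = 133+1 from rfl, pc_step_np (by norm_num), pc133]
lemma pr135 : primorial 135 = 525896479052627740771371797072411912900610967452630 := by rw [show (135:ℕ) = 134+1 from rfl, primorial_step_np (by norm_num), pr134]
lemma pc135 : pc 135 = 32 := by rw [show (135:ℕ) = 134+1 from rfl, pc_step_np (by norm_num), pc134]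
lemma pr136 : primorial 136 = 525896479052627740771371797072411912900610967452630 := by rw [show (136:ℕ) = 135+1 from rfl, primorial_step_np (by norm_num), pr135]
lemma pc136 : pc 136 = 32 := by rw [show (136:ℕ) = 135+1 from rfl, pc_step_np (by norm_num), pc135]
lemma pr137 : primorial 137 = 72047817630210000485677936198920432067383702541010310 := by rw [show (137:ℕ) = 136+1 from rfl, primorial_step_p (by norm_num), pr136]
lemma pc137 : pc 137 = 33 := by rw [show (137:ℕ) = 136+1 from rfl, pc_step_p (by norm_num), pc136]
lemma pr138 : primorial 138 = 72047817630210000485677936198920432067383702541010310 := by rw [show (138:ℕ) = 137+1 from rfl, primorial_step_np (by norm_num), pr137]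
lemma pc138 : pc 138 = 33 := by rw [show (138:ℕ) = 137+1 from rfl, pc_step_np (by norm_num), pc137]
lemma pr139 : primorial 139 = 10014646650599190067509233131649940057366334653200433090 := by rw [show (139:ℕ) = 138+1 from rfl, primorial_step_p (by norm_num), pr138]
lemma pc139 : pc 139 = 34 := by rw [show (139:ℕ) = 138+1 from rfl, pc_step_p (by norm_num), pc138]
lemma pr140 : primorial 140 = 10014646650599190067509233131649940057366334653200433090 := by rw [show (140:ℕ) = 139+1 from rfl, primorial_step_np (by norm_num), pr139]
lemma pc140 : pc 140 = 34 := by rw [show (140:ℕ) = 139+1 from rfl, pc_step_np (by norm_num), pc139]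
lemma pr141 : primorial 141 = 10014646650599190067509233131649940057366334653200433090 := by rw [show (141:ℕ) = 140+1 from rfl, primorial_step_np (by norm_num), pr140]
lemma pc141 : pc 141 = 34 := by rw [show (141:ℕ) = 140+1 from rfl, pc_step_np (by norm_num), pc140]
lemma pr142 : primorial 142 = 10014646650599190067509233131649940057366334653200433090 := by rw [show (142:ℕ) = 141+1 from rfl, primorial_step_np (by norm_num), pr141]
lemma pc142 : pc 142 = 34 := by rw [show (142:ℕ) = 141+1 from rfl, pc_step_np (by norm_num), pc141]
lemma pr143 : primorial 143 = 10014646650599190067509233131649940057366334653200433090 := by rw [show (143:ℕ) = 142+1 from rfl, primorial_step_np (by norm_num), pr142]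
lemma pc143 : pc 143 = 34 := by rw [show (143:ℕ) = 142+1 from rfl, pc_step_np (by norm_num), pc142]
lemma pr144 : primorial 144 = 10014646650599190067509233131649940057366334653200433090 := by rw [show (144:ℕ) = 143+1 from rfl, primorial_step_np (by norm_num), pr143]
lemma pc144 : pc 144 = 34 := by rw [show (144:ℕ) = 143+1 from rfl, pc_step_np (by norm_num), pc143]
lemma pr145 : primorial 145 = 10014646650599190067509233131649940057366334653200433090 := by rw [show (145:ℕ) = 144+1 from rfl, primorial_step_np (by norm_num), pr144]
lemma pc145 : pc 145 = 34 := by rw [show (145:ℕ) = 144+1 from rfl, pc_step_np (by norm_num), pc144]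
lemma pr146 : primorial 146 = 10014646650599190067509233131649940057366334653200433090 := by rw [show (146:ℕ) = 145+1 from rfl, primorial_step_np (by norm_num), pr145]
lemma pc146 : pc 146 = 34 := by rw [show (146:ℕ) = 145+1 from rfl, pc_step_np (by norm_num), pc145]
lemma pr147 : primorial 147 = 10014646650599190067509233131649940057366334653200433090 := by rw [show (147:ℕ) = 146+1 from rfl, primorial_step_np (by norm_num), pr146]
lemma pc147 : pc 147 = 34 := by rw [show (147:ℕ) = 146+1 from rfl, pc_step_np (by norm_num), pc146]
lemma pr148 : primorial 148 = 10014646650599190067509233131649940057366334653200433090 := by rw [show (148:ℕ) = 147+1 from rfl, primorial_step_np (by norm_num), pr147]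
lemma pc148 : pc 148 = 34 := by rw [show (148:ℕ) = 147+1 from rfl, pc_step_np (by norm_num), pc147]
lemma num3 : (pc 3 : ℝ) - chebyshevTheta ((3:ℕ) : ℝ) / Real.log (((3:ℕ) : ℝ) + 1) ≤ phi ((3:ℕ) : ℝ) + 1 :=
  numeric_helper 3 2 6 41 256 203 (by norm_num) pc3 pr3 (by norm_num) (by norm_num) (by norm_num) (by norm_num) (by norm_num) (by norm_num)
lemma num4 : (pc 4 : ℝ) - chebyshevTheta ((4:ℕ) : ℝ) / Real.log (((4:ℕ) : ℝ) + 1) ≤ phi ((4:ℕ) : ℝ) + 1 :=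
  numeric_helper 4 2 6 41 298 256 (by norm_num) pc4 pr4 (by norm_num) (by decide) (by norm_num) (by norm_num) (by norm_num) (by norm_num)
lemma num5 : (pc 5 : ℝ) - chebyshevTheta ((5:ℕ) : ℝ) / Real.log (((5:ℕ) : ℝ) + 1) ≤ phi ((5:ℕ) : ℝ) + 1 :=
  numeric_helper 5 3 30 78 331 298 (by norm_num) pc5 pr5 (by norm_num) (by decide) (by decide) (by norm_num) (by norm_num) (by norm_num)
lemma num6 : (pc 6 : ℝ) - chebyshevTheta ((6:ℕ) : ℝ) / Real.log (((6:ℕ) : ℝ) + 1) ≤ phi ((6:ℕ) : ℝ) + 1 :=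
  numeric_helper 6 3 30 78 360 331 (by norm_num) pc6 pr6 (by norm_num) (by decide) (by decide) (by norm_num) (by norm_num) (by norm_num)
lemma num7 : (pc 7 : ℝ) - chebyshevTheta ((7:ℕ) : ℝ) / Real.log (((7:ℕ) : ℝ) + 1) ≤ phi ((7:ℕ) : ℝ) + 1 :=
  numeric_helper 7 4 210 123 384 360 (by norm_num) pc7 pr7 (by norm_num) (by decide) (by decide) (by norm_num) (by norm_num) (by norm_num)
lemma num8 : (pc 8 : ℝ) - chebyshevTheta ((8:ℕ) : ℝ) / Real.log (((8:ℕ) : ℝ) + 1) ≤ phi ((8:ℕ) : ℝ) + 1 :=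
  numeric_helper 8 4 210 123 406 384 (by norm_num) pc8 pr8 (by norm_num) (by decide) (by decide) (by norm_num) (by norm_num) (by norm_num)
lemma num9 : (pc 9 : ℝ) - chebyshevTheta ((9:ℕ) : ℝ) / Real.log (((9:ℕ) : ℝ) + 1) ≤ phi ((9:ℕ) : ℝ) + 1 :=
  numeric_helper 9 4 210 123 426 406 (by norm_num) pc9 pr9 (by norm_num) (by decide) (by decide) (by norm_num) (by norm_num) (by norm_num)
lemma num10 : (pc 10 : ℝ) - chebyshevTheta ((10:ℕ) : ℝ) / Real.log (((10:ℕ) : ℝ) + 1) ≤ phi ((10:ℕ) : ℝ) + 1 :=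
  numeric_helper 10 4 210 123 443 426 (by norm_num) pc10 pr10 (by norm_num) (by decide) (by decide) (by norm_num) (by norm_num) (by norm_num)
lemma num11 : (pc 11 : ℝ) - chebyshevTheta ((11:ℕ) : ℝ) / Real.log (((11:ℕ) : ℝ) + 1) ≤ phi ((11:ℕ) : ℝ) + 1 :=
  numeric_helper 11 5 2310 178 459 443 (by norm_num) pc11 pr11 (by norm_num) (by decide) (by decide) (by norm_num) (by norm_num) (by norm_num)
lemma num12 : (pc 12 : ℝ) - chebyshevTheta ((12:ℕ) : ℝ) / Real.log (((12:ℕ) : ℝ) + 1) ≤ phi ((12:ℕ) : ℝ) + 1 :=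
  numeric_helper 12 5 2310 178 474 459 (by norm_num) pc12 pr12 (by norm_num) (by decide) (by decide) (by norm_num) (by norm_num) (by norm_num)
lemma num13 : (pc 13 : ℝ) - chebyshevTheta ((13:ℕ) : ℝ) / Real.log (((13:ℕ) : ℝ) + 1) ≤ phi ((13:ℕ) : ℝ) + 1 :=
  numeric_helper 13 6 30030 237 488 474 (by norm_num) pc13 pr13 (by norm_num) (by decide) (by decide) (by norm_num) (by norm_num) (by norm_num)
lemma num14 : (pc 14 : ℝ) - chebyshevTheta ((14:ℕ) : ℝ) / Real.log (((14:ℕ) : ℝ) + 1) ≤ phi ((14:ℕ) : ℝ) + 1 :=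
  numeric_helper 14 6 30030 237 501 488 (by norm_num) pc14 pr14 (by norm_num) (by decide) (by decide) (by norm_num) (by norm_num) (by norm_num)
lemma num15 : (pc 15 : ℝ) - chebyshevTheta ((15:ℕ) : ℝ) / Real.log (((15:ℕ) : ℝ) + 1) ≤ phi ((15:ℕ) : ℝ) + 1 :=
  numeric_helper 15 6 30030 237 512 501 (by norm_num) pc15 pr15 (by norm_num) (by decide) (by decide) (by norm_num) (by norm_num) (by norm_num)
lemma num16 : (pc 16 : ℝ) - chebyshevTheta ((16:ℕ) : ℝ) / Real.log (((16:ℕ) : ℝ) + 1) ≤ phi ((16:ℕ) : ℝ) + 1 :=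
  numeric_helper 16 6 30030 237 524 512 (by norm_num) pc16 pr16 (by norm_num) (by decide) (by decide) (by norm_num) (by norm_num) (by norm_num)
lemma num17 : (pc 17 : ℝ) - chebyshevTheta ((17:ℕ) : ℝ) / Real.log (((17:ℕ) : ℝ) + 1) ≤ phi ((17:ℕ) : ℝ) + 1 :=
  numeric_helper 17 7 510510 303 534 524 (by norm_num) pc17 pr17 (by decide) (by decide) (by decide) (by norm_num) (by norm_num) (by norm_num)
lemma num18 : (pc 18 : ℝ) - chebyshevTheta ((18:ℕ) : ℝ) / Real.log (((18:ℕ) : ℝ) + 1) ≤ phi ((18:ℕ) : ℝ) + 1 :=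
  numeric_helper 18 7 510510 303 544 534 (by norm_num) pc18 pr18 (by decide) (by decide) (by decide) (by norm_num) (by norm_num) (by norm_num)
lemma num19 : (pc 19 : ℝ) - chebyshevTheta ((19:ℕ) : ℝ) / Real.log (((19:ℕ) : ℝ) + 1) ≤ phi ((19:ℕ) : ℝ) + 1 :=
  numeric_helper 19 8 9699690 371 554 544 (by norm_num) pc19 pr19 (by decide) (by decide) (by decide) (by norm_num) (by norm_num) (by norm_num)
lemma num20 : (pc 20 : ℝ) - chebyshevTheta ((20:ℕ) : ℝ) / Real.log (((20:ℕ) : ℝ) + 1) ≤ phi ((20:ℕ) : ℝ) + 1 :=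
  numeric_helper 20 8 9699690 371 563 554 (by norm_num) pc20 pr20 (by decide) (by decide) (by decide) (by norm_num) (by norm_num) (by norm_num)
lemma num21 : (pc 21 : ℝ) - chebyshevTheta ((21:ℕ) : ℝ) / Real.log (((21:ℕ) : ℝ) + 1) ≤ phi ((21:ℕ) : ℝ) + 1 :=
  numeric_helper 21 8 9699690 371 571 563 (by norm_num) pc21 pr21 (by decide) (by decide) (by decide) (by norm_num) (by norm_num) (by norm_num)
lemma num22 : (pc 22 : ℝ) - chebyshevTheta ((22:ℕ) : ℝ) / Real.log (((22:ℕ) : ℝ) + 1) ≤ phi ((22:ℕ) : ℝ) + 1 :=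
  numeric_helper 22 8 9699690 371 580 571 (by norm_num) pc22 pr22 (by decide) (by decide) (by decide) (by norm_num) (by norm_num) (by norm_num)
lemma num23 : (pc 23 : ℝ) - chebyshevTheta ((23:ℕ) : ℝ) / Real.log (((23:ℕ) : ℝ) + 1) ≤ phi ((23:ℕ) : ℝ) + 1 :=
  numeric_helper 23 9 223092870 443 587 580 (by norm_num) pc23 pr23 (by decide) (by decide) (by decide) (by norm_num) (by norm_num) (by norm_num)
lemma num24 : (pc 24 : ℝ) - chebyshevTheta ((24:ℕ) : ℝ) / Real.log (((24:ℕ) : ℝ) + 1) ≤ phi ((24:ℕ) : ℝ) + 1 :=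
  numeric_helper 24 9 223092870 443 595 587 (by norm_num) pc24 pr24 (by decide) (by decide) (by decide) (by norm_num) (by norm_num) (by norm_num)
lemma num25 : (pc 25 : ℝ) - chebyshevTheta ((25:ℕ) : ℝ) / Real.log (((25:ℕ) : ℝ) + 1) ≤ phi ((25:ℕ) : ℝ) + 1 :=
  numeric_helper 25 9 223092870 443 602 595 (by norm_num) pc25 pr25 (by decide) (by decide) (by decide) (by norm_num) (by norm_num) (by norm_num)
lemma num26 : (pc 26 : ℝ) - chebyshevTheta ((26:ℕ) : ℝ) / Real.log (((26:ℕ) : ℝ) + 1) ≤ phi ((26:ℕ) : ℝ) + 1 :=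
  numeric_helper 26 9 223092870 443 609 602 (by norm_num) pc26 pr26 (by decide) (by decide) (by decide) (by norm_num) (by norm_num) (by norm_num)
lemma num27 : (pc 27 : ℝ) - chebyshevTheta ((27:ℕ) : ℝ) / Real.log (((27:ℕ) : ℝ) + 1) ≤ phi ((27:ℕ) : ℝ) + 1 :=
  numeric_helper 27 9 223092870 443 616 609 (by norm_num) pc27 pr27 (by decide) (by decide) (by decide) (by norm_num) (by norm_num) (by norm_num)
lemma num28 : (pc 28 : ℝ) - chebyshevTheta ((28:ℕ) : ℝ) / Real.log (((28:ℕ) : ℝ) + 1) ≤ phi ((28:ℕ) : ℝ) + 1 :=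
  numeric_helper 28 9 223092870 443 622 616 (by norm_num) pc28 pr28 (by decide) (by decide) (by decide) (by norm_num) (by norm_num) (by norm_num)
lemma num29 : (pc 29 : ℝ) - chebyshevTheta ((29:ℕ) : ℝ) / Real.log (((29:ℕ) : ℝ) + 1) ≤ phi ((29:ℕ) : ℝ) + 1 :=
  numeric_helper 29 10 6469693230 521 629 622 (by norm_num) pc29 pr29 (by decide) (by decide) (by decide) (by norm_num) (by norm_num) (by norm_num)
lemma num30 : (pc 30 : ℝ) - chebyshevTheta ((30:ℕ) : ℝ) / Real.log (((30:ℕ) : ℝ) + 1) ≤ phi ((30:ℕ) : ℝ) + 1 :=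
  numeric_helper 30 10 6469693230 521 635 629 (by norm_num) pc30 pr30 (by decide) (by decide) (by decide) (by norm_num) (by norm_num) (by norm_num)
lemma num31 : (pc 31 : ℝ) - chebyshevTheta ((31:ℕ) : ℝ) / Real.log (((31:ℕ) : ℝ) + 1) ≤ phi ((31:ℕ) : ℝ) + 1 :=
  numeric_helper 31 11 200560490130 600 640 635 (by norm_num) pc31 pr31 (by decide) (by decide) (by decide) (by norm_num) (by norm_num) (by norm_num)
lemma num32 : (pc 32 : ℝ) - chebyshevTheta ((32:ℕ) : ℝ) / Real.log (((32:ℕ) : ℝ) + 1) ≤ phi ((32:ℕ) : ℝ) + 1 :=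
  numeric_helper 32 11 200560490130 600 646 640 (by norm_num) pc32 pr32 (by decide) (by decide) (by decide) (by norm_num) (by norm_num) (by norm_num)
lemma num33 : (pc 33 : ℝ) - chebyshevTheta ((33:ℕ) : ℝ) / Real.log (((33:ℕ) : ℝ) + 1) ≤ phi ((33:ℕ) : ℝ) + 1 :=
  numeric_helper 33 11 200560490130 600 652 646 (by norm_num) pc33 pr33 (by decide) (by decide) (by decide) (by norm_num) (by norm_num) (by norm_num)
lemma num34 : (pc 34 : ℝ) - chebyshevTheta ((34:ℕ) : ℝ) / Real.log (((34:ℕ) : ℝ) + 1) ≤ phi ((34:ℕ) : ℝ) + 1 :=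
  numeric_helper 34 11 200560490130 600 657 652 (by norm_num) pc34 pr34 (by decide) (by decide) (by decide) (by norm_num) (by norm_num) (by norm_num)
lemma num35 : (pc 35 : ℝ) - chebyshevTheta ((35:ℕ) : ℝ) / Real.log (((35:ℕ) : ℝ) + 1) ≤ phi ((35:ℕ) : ℝ) + 1 :=
  numeric_helper 35 11 200560490130 600 662 657 (by norm_num) pc35 pr35 (by decide) (by decide) (by decide) (by norm_num) (by norm_num) (by norm_num)
lemma num36 : (pc 36 : ℝ) - chebyshevTheta ((36:ℕ) : ℝ) / Real.log (((36:ℕ) : ℝ) + 1) ≤ phi ((36:ℕ) : ℝ) + 1 :=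
  numeric_helper 36 11 200560490130 600 667 662 (by norm_num) pc36 pr36 (by decide) (by decide) (by decide) (by norm_num) (by norm_num) (by norm_num)
lemma num37 : (pc 37 : ℝ) - chebyshevTheta ((37:ℕ) : ℝ) / Real.log (((37:ℕ) : ℝ) + 1) ≤ phi ((37:ℕ) : ℝ) + 1 :=
  numeric_helper 37 12 7420738134810 684 672 667 (by norm_num) pc37 pr37 (by decide) (by decide) (by decide) (by norm_num) (by norm_num) (by norm_num)
lemma num38 : (pc 38 : ℝ) - chebyshevTheta ((38:ℕ) : ℝ) / Real.log (((38:ℕ) : ℝ) + 1) ≤ phi ((38:ℕ) : ℝ) + 1 :=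
  numeric_helper 38 12 7420738134810 684 677 672 (by norm_num) pc38 pr38 (by decide) (by decide) (by decide) (by norm_num) (by norm_num) (by norm_num)
lemma num39 : (pc 39 : ℝ) - chebyshevTheta ((39:ℕ) : ℝ) / Real.log (((39:ℕ) : ℝ) + 1) ≤ phi ((39:ℕ) : ℝ) + 1 :=
  numeric_helper 39 12 7420738134810 684 682 677 (by norm_num) pc39 pr39 (by decide) (by decide) (by decide) (by norm_num) (by norm_num) (by norm_num)
lemma num40 : (pc 40 : ℝ) - chebyshevTheta ((40:ℕ) : ℝ) / Real.log (((40:ℕ) : ℝ) + 1) ≤ phi ((40:ℕ) : ℝ) + 1 :=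
  numeric_helper 40 12 7420738134810 684 686 682 (by norm_num) pc40 pr40 (by decide) (by decide) (by decide) (by norm_num) (by norm_num) (by norm_num)
lemma num41 : (pc 41 : ℝ) - chebyshevTheta ((41:ℕ) : ℝ) / Real.log (((41:ℕ) : ℝ) + 1) ≤ phi ((41:ℕ) : ℝ) + 1 :=
  numeric_helper 41 13 304250263527210 769 691 686 (by norm_num) pc41 pr41 (by decide) (by decide) (by decide) (by norm_num) (by norm_num) (by norm_num)
lemma num42 : (pc 42 : ℝ) - chebyshevTheta ((42:ℕ) : ℝ) / Real.log (((42:ℕ) : ℝ) + 1) ≤ phi ((42:ℕ) : ℝ) + 1 :=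
  numeric_helper 42 13 304250263527210 769 695 691 (by norm_num) pc42 pr42 (by decide) (by decide) (by decide) (by norm_num) (by norm_num) (by norm_num)
lemma num43 : (pc 43 : ℝ) - chebyshevTheta ((43:ℕ) : ℝ) / Real.log (((43:ℕ) : ℝ) + 1) ≤ phi ((43:ℕ) : ℝ) + 1 :=
  numeric_helper 43 14 13082761331670030 856 699 695 (by norm_num) pc43 pr43 (by decide) (by decide) (by decide) (by norm_num) (by norm_num) (by norm_num)
lemma num44 : (pc 44 : ℝ) - chebyshevTheta ((44:ℕ) : ℝ) / Real.log (((44:ℕ) : ℝ) + 1) ≤ phi ((44:ℕ) : ℝ) + 1 :=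
  numeric_helper 44 14 13082761331670030 856 703 699 (by norm_num) pc44 pr44 (by decide) (by decide) (by decide) (by norm_num) (by norm_num) (by norm_num)
lemma num45 : (pc 45 : ℝ) - chebyshevTheta ((45:ℕ) : ℝ) / Real.log (((45:ℕ) : ℝ) + 1) ≤ phi ((45:ℕ) : ℝ) + 1 :=
  numeric_helper 45 14 13082761331670030 856 708 703 (by norm_num) pc45 pr45 (by decide) (by decide) (by decide) (by norm_num) (by norm_num) (by norm_num)
lemma num46 : (pc 46 : ℝ) - chebyshevTheta ((46:ℕ) : ℝ) / Real.log (((46:ℕ) : ℝ) + 1) ≤ phi ((46:ℕ) : ℝ) + 1 :=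
  numeric_helper 46 14 13082761331670030 856 711 708 (by norm_num) pc46 pr46 (by decide) (by decide) (by decide) (by norm_num) (by norm_num) (by norm_num)
lemma num47 : (pc 47 : ℝ) - chebyshevTheta ((47:ℕ) : ℝ) / Real.log (((47:ℕ) : ℝ) + 1) ≤ phi ((47:ℕ) : ℝ) + 1 :=
  numeric_helper 47 15 614889782588491410 945 715 711 (by norm_num) pc47 pr47 (by decide) (by decide) (by decide) (by norm_num) (by norm_num) (by norm_num)
lemma num48 : (pc 48 : ℝ) - chebyshevTheta ((48:ℕ) : ℝ) / Real.log (((48:ℕ) : ℝ) + 1) ≤ phi ((48:ℕ) : ℝ) + 1 :=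
  numeric_helper 48 15 614889782588491410 945 719 715 (by norm_num) pc48 pr48 (by decide) (by decide) (by decide) (by norm_num) (by norm_num) (by norm_num)
lemma num49 : (pc 49 : ℝ) - chebyshevTheta ((49:ℕ) : ℝ) / Real.log (((49:ℕ) : ℝ) + 1) ≤ phi ((49:ℕ) : ℝ) + 1 :=
  numeric_helper 49 15 614889782588491410 945 723 719 (by norm_num) pc49 pr49 (by decide) (by decide) (by decide) (by norm_num) (by norm_num) (by norm_num)
lemma num50 : (pc 50 : ℝ) - chebyshevTheta ((50:ℕ) : ℝ) / Real.log (((50:ℕ) : ℝ) + 1) ≤ phi ((50:ℕ) : ℝ) + 1 :=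
  numeric_helper 50 15 614889782588491410 945 727 723 (by norm_num) pc50 pr50 (by decide) (by decide) (by decide) (by norm_num) (by norm_num) (by norm_num)
lemma num51 : (pc 51 : ℝ) - chebyshevTheta ((51:ℕ) : ℝ) / Real.log (((51:ℕ) : ℝ) + 1) ≤ phi ((51:ℕ) : ℝ) + 1 :=
  numeric_helper 51 15 614889782588491410 945 730 727 (by norm_num) pc51 pr51 (by decide) (by decide) (by decide) (by norm_num) (by norm_num) (by norm_num)
lemma num52 : (pc 52 : ℝ) - chebyshevTheta ((52:ℕ) : ℝ) / Real.log (((52:ℕ) : ℝ) + 1) ≤ phi ((52:ℕ) : ℝ) + 1 :=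
  numeric_helper 52 15 614889782588491410 945 734 730 (by norm_num) pc52 pr52 (by decide) (by decide) (by decide) (by norm_num) (by norm_num) (by norm_num)
lemma num53 : (pc 53 : ℝ) - chebyshevTheta ((53:ℕ) : ℝ) / Real.log (((53:ℕ) : ℝ) + 1) ≤ phi ((53:ℕ) : ℝ) + 1 :=
  numeric_helper 53 16 32589158477190044730 1037 737 734 (by norm_num) pc53 pr53 (by decide) (by decide) (by decide) (by norm_num) (by norm_num) (by norm_num)
lemma num54 : (pc 54 : ℝ) - chebyshevTheta ((54:ℕ) : ℝ) / Real.log (((54:ℕ) : ℝ) + 1) ≤ phi ((54:ℕ) : ℝ) + 1 :=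
  numeric_helper 54 16 32589158477190044730 1037 741 737 (by norm_num) pc54 pr54 (by decide) (by decide) (by decide) (by norm_num) (by norm_num) (by norm_num)
lemma num55 : (pc 55 : ℝ) - chebyshevTheta ((55:ℕ) : ℝ) / Real.log (((55:ℕ) : ℝ) + 1) ≤ phi ((55:ℕ) : ℝ) + 1 :=
  numeric_helper 55 16 32589158477190044730 1037 744 741 (by norm_num) pc55 pr55 (by decide) (by decide) (by decide) (by norm_num) (by norm_num) (by norm_num)
lemma num56 : (pc 56 : ℝ) - chebyshevTheta ((56:ℕ) : ℝ) / Real.log (((56:ℕ) : ℝ) + 1) ≤ phi ((56:ℕ) : ℝ) + 1 :=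
  numeric_helper 56 16 32589158477190044730 1037 747 744 (by norm_num) pc56 pr56 (by decide) (by decide) (by decide) (by norm_num) (by norm_num) (by norm_num)
lemma num57 : (pc 57 : ℝ) - chebyshevTheta ((57:ℕ) : ℝ) / Real.log (((57:ℕ) : ℝ) + 1) ≤ phi ((57:ℕ) : ℝ) + 1 :=
  numeric_helper 57 16 32589158477190044730 1037 750 747 (by norm_num) pc57 pr57 (by decide) (by decide) (by decide) (by norm_num) (by norm_num) (by norm_num)
lemma num58 : (pc 58 : ℝ) - chebyshevTheta ((58:ℕ) : ℝ) / Real.log (((58:ℕ) : ℝ) + 1) ≤ phi ((58:ℕ) : ℝ) + 1 :=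
  numeric_helper 58 16 32589158477190044730 1037 753 750 (by norm_num) pc58 pr58 (by decide) (by decide) (by decide) (by norm_num) (by norm_num) (by norm_num)
lemma num59 : (pc 59 : ℝ) - chebyshevTheta ((59:ℕ) : ℝ) / Real.log (((59:ℕ) : ℝ) + 1) ≤ phi ((59:ℕ) : ℝ) + 1 :=
  numeric_helper 59 17 1922760350154212639070 1131 757 753 (by norm_num) pc59 pr59 (by decide) (by decide) (by decide) (by norm_num) (by norm_num) (by norm_num)
lemma num60 : (pc 60 : ℝ) - chebyshevTheta ((60:ℕ) : ℝ) / Real.log (((60:ℕ) : ℝ) + 1) ≤ phi ((60:ℕ) : ℝ) + 1 :=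
  numeric_helper 60 17 1922760350154212639070 1131 760 757 (by norm_num) pc60 pr60 (by decide) (by decide) (by decide) (by norm_num) (by norm_num) (by norm_num)
lemma num61 : (pc 61 : ℝ) - chebyshevTheta ((61:ℕ) : ℝ) / Real.log (((61:ℕ) : ℝ) + 1) ≤ phi ((61:ℕ) : ℝ) + 1 :=
  numeric_helper 61 18 117288381359406970983270 1226 763 760 (by norm_num) pc61 pr61 (by decide) (by decide) (by decide) (by norm_num) (by norm_num) (by norm_num)
lemma num62 : (pc 62 : ℝ) - chebyshevTheta ((62:ℕ) : ℝ) / Real.log (((62:ℕ) : ℝ) + 1) ≤ phi ((62:ℕ) : ℝ) + 1 :=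
  numeric_helper 62 18 117288381359406970983270 1226 766 763 (by norm_num) pc62 pr62 (by decide) (by decide) (by decide) (by norm_num) (by norm_num) (by norm_num)
lemma num63 : (pc 63 : ℝ) - chebyshevTheta ((63:ℕ) : ℝ) / Real.log (((63:ℕ) : ℝ) + 1) ≤ phi ((63:ℕ) : ℝ) + 1 :=
  numeric_helper 63 18 117288381359406970983270 1226 768 766 (by norm_num) pc63 pr63 (by decide) (by decide) (by decide) (by norm_num) (by norm_num) (by norm_num)
lemma num64 : (pc 64 : ℝ) - chebyshevTheta ((64:ℕ) : ℝ) / Real.log (((64:ℕ) : ℝ) + 1) ≤ phi ((64:ℕ) : ℝ) + 1 :=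
  numeric_helper 64 18 117288381359406970983270 1226 771 768 (by norm_num) pc64 pr64 (by decide) (by decide) (by decide) (by norm_num) (by norm_num) (by norm_num)
lemma num65 : (pc 65 : ℝ) - chebyshevTheta ((65:ℕ) : ℝ) / Real.log (((65:ℕ) : ℝ) + 1) ≤ phi ((65:ℕ) : ℝ) + 1 :=
  numeric_helper 65 18 117288381359406970983270 1226 774 771 (by norm_num) pc65 pr65 (by decide) (by decide) (by decide) (by norm_num) (by norm_num) (by norm_num)
lemma num66 : (pc 66 : ℝ) - chebyshevTheta ((66:ℕ) : ℝ) / Real.log (((66:ℕ) : ℝ) + 1) ≤ phi ((66:ℕ) : ℝ) + 1 :=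
  numeric_helper 66 18 117288381359406970983270 1226 777 774 (by norm_num) pc66 pr66 (by decide) (by decide) (by decide) (by norm_num) (by norm_num) (by norm_num)
lemma num67 : (pc 67 : ℝ) - chebyshevTheta ((67:ℕ) : ℝ) / Real.log (((67:ℕ) : ℝ) + 1) ≤ phi ((67:ℕ) : ℝ) + 1 :=
  numeric_helper 67 19 7858321551080267055879090 1323 780 777 (by norm_num) pc67 pr67 (by decide) (by decide) (by decide) (by norm_num) (by norm_num) (by norm_num)
lemma num68 : (pc 68 : ℝ) - chebyshevTheta ((68:ℕ) : ℝ) / Real.log (((68:ℕ) : ℝ) + 1) ≤ phi ((68:ℕ) : ℝ) + 1 :=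
  numeric_helper 68 19 7858321551080267055879090 1323 782 780 (by norm_num) pc68 pr68 (by decide) (by decide) (by decide) (by norm_num) (by norm_num) (by norm_num)
lemma num69 : (pc 69 : ℝ) - chebyshevTheta ((69:ℕ) : ℝ) / Real.log (((69:ℕ) : ℝ) + 1) ≤ phi ((69:ℕ) : ℝ) + 1 :=
  numeric_helper 69 19 7858321551080267055879090 1323 785 782 (by norm_num) pc69 pr69 (by decide) (by decide) (by decide) (by norm_num) (by norm_num) (by norm_num)
lemma num70 : (pc 70 : ℝ) - chebyshevTheta ((70:ℕ) : ℝ) / Real.log (((70:ℕ) : ℝ) + 1) ≤ phi ((70:ℕ) : ℝ) + 1 :=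
  numeric_helper 70 19 7858321551080267055879090 1323 788 785 (by norm_num) pc70 pr70 (by decide) (by decide) (by decide) (by norm_num) (by norm_num) (by norm_num)
lemma num71 : (pc 71 : ℝ) - chebyshevTheta ((71:ℕ) : ℝ) / Real.log (((71:ℕ) : ℝ) + 1) ≤ phi ((71:ℕ) : ℝ) + 1 :=
  numeric_helper 71 20 557940830126698960967415390 1421 790 788 (by norm_num) pc71 pr71 (by decide) (by decide) (by decide) (by norm_num) (by norm_num) (by norm_num)
lemma num72 : (pc 72 : ℝ) - chebyshevTheta ((72:ℕ) : ℝ) / Real.log (((72:ℕ) : ℝ) + 1) ≤ phi ((72:ℕ) : ℝ) + 1 :=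
  numeric_helper 72 20 557940830126698960967415390 1421 793 790 (by norm_num) pc72 pr72 (by decide) (by decide) (by decide) (by norm_num) (by norm_num) (by norm_num)
lemma num73 : (pc 73 : ℝ) - chebyshevTheta ((73:ℕ) : ℝ) / Real.log (((73:ℕ) : ℝ) + 1) ≤ phi ((73:ℕ) : ℝ) + 1 :=
  numeric_helper 73 21 40729680599249024150621323470 1520 795 793 (by norm_num) pc73 pr73 (by decide) (by decide) (by decide) (by norm_num) (by norm_num) (by norm_num)
lemma num74 : (pc 74 : ℝ) - chebyshevTheta ((74:ℕ) : ℝ) / Real.log (((74:ℕ) : ℝ) + 1) ≤ phi ((74:ℕ) : ℝ) + 1 :=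
  numeric_helper 74 21 40729680599249024150621323470 1520 798 795 (by norm_num) pc74 pr74 (by decide) (by decide) (by decide) (by norm_num) (by norm_num) (by norm_num)
lemma num75 : (pc 75 : ℝ) - chebyshevTheta ((75:ℕ) : ℝ) / Real.log (((75:ℕ) : ℝ) + 1) ≤ phi ((75:ℕ) : ℝ) + 1 :=
  numeric_helper 75 21 40729680599249024150621323470 1520 800 798 (by norm_num) pc75 pr75 (by decide) (by decide) (by decide) (by norm_num) (by norm_num) (by norm_num)
lemma num76 : (pc 76 : ℝ) - chebyshevTheta ((76:ℕ) : ℝ) / Real.log (((76:ℕ) : ℝ) + 1) ≤ phi ((76:ℕ) : ℝ) + 1 :=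
  numeric_helper 76 21 40729680599249024150621323470 1520 803 800 (by norm_num) pc76 pr76 (by decide) (by decide) (by decide) (by norm_num) (by norm_num) (by norm_num)
lemma num77 : (pc 77 : ℝ) - chebyshevTheta ((77:ℕ) : ℝ) / Real.log (((77:ℕ) : ℝ) + 1) ≤ phi ((77:ℕ) : ℝ) + 1 :=
  numeric_helper 77 21 40729680599249024150621323470 1520 805 803 (by norm_num) pc77 pr77 (by decide) (by decide) (by decide) (by norm_num) (by norm_num) (by norm_num)
lemma num78 : (pc 78 : ℝ) - chebyshevTheta ((78:ℕ) : ℝ) / Real.log (((78:ℕ) : ℝ) + 1) ≤ phi ((78:ℕ) : ℝ) + 1 :=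
  numeric_helper 78 21 40729680599249024150621323470 1520 807 805 (by norm_num) pc78 pr78 (by decide) (by decide) (by decide) (by norm_num) (by norm_num) (by norm_num)
lemma num79 : (pc 79 : ℝ) - chebyshevTheta ((79:ℕ) : ℝ) / Real.log (((79:ℕ) : ℝ) + 1) ≤ phi ((79:ℕ) : ℝ) + 1 :=
  numeric_helper 79 22 3217644767340672907899084554130 1621 810 807 (by norm_num) pc79 pr79 (by decide) (by decide) (by decide) (by norm_num) (by norm_num) (by norm_num)
lemma num80 : (pc 80 : ℝ) - chebyshevTheta ((80:ℕ) : ℝ) / Real.log (((80:ℕ) : ℝ) + 1) ≤ phi ((80:ℕ) : ℝ) + 1 :=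
  numeric_helper 80 22 3217644767340672907899084554130 1621 812 810 (by norm_num) pc80 pr80 (by decide) (by decide) (by decide) (by norm_num) (by norm_num) (by norm_num)
lemma num81 : (pc 81 : ℝ) - chebyshevTheta ((81:ℕ) : ℝ) / Real.log (((81:ℕ) : ℝ) + 1) ≤ phi ((81:ℕ) : ℝ) + 1 :=
  numeric_helper 81 22 3217644767340672907899084554130 1621 814 812 (by norm_num) pc81 pr81 (by decide) (by decide) (by decide) (by norm_num) (by norm_num) (by norm_num)
lemma num82 : (pc 82 : ℝ) - chebyshevTheta ((82:ℕ) : ℝ) / Real.log (((82:ℕ) : ℝ) + 1) ≤ phi ((82:ℕ) : ℝ) + 1 :=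
  numeric_helper 82 22 3217644767340672907899084554130 1621 817 814 (by norm_num) pc82 pr82 (by decide) (by decide) (by decide) (by norm_num) (by norm_num) (by norm_num)
lemma num83 : (pc 83 : ℝ) - chebyshevTheta ((83:ℕ) : ℝ) / Real.log (((83:ℕ) : ℝ) + 1) ≤ phi ((83:ℕ) : ℝ) + 1 :=
  numeric_helper 83 23 267064515689275851355624017992790 1723 819 817 (by norm_num) pc83 pr83 (by decide) (by decide) (by decide) (by norm_num) (by norm_num) (by norm_num)
lemma num84 : (pc 84 : ℝ) - chebyshevTheta ((84:ℕ) : ℝ) / Real.log (((84:ℕ) : ℝ) + 1) ≤ phi ((84:ℕ) : ℝ) + 1 :=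
  numeric_helper 84 23 267064515689275851355624017992790 1723 821 819 (by norm_num) pc84 pr84 (by decide) (by decide) (by decide) (by norm_num) (by norm_num) (by norm_num)
lemma num85 : (pc 85 : ℝ) - chebyshevTheta ((85:ℕ) : ℝ) / Real.log (((85:ℕ) : ℝ) + 1) ≤ phi ((85:ℕ) : ℝ) + 1 :=
  numeric_helper 85 23 267064515689275851355624017992790 1723 823 821 (by norm_num) pc85 pr85 (by decide) (by decide) (by decide) (by norm_num) (by norm_num) (by norm_num)
lemma num86 : (pc 86 : ℝ) - chebyshevTheta ((86:ℕ) : ℝ) / Real.log (((86:ℕ) : ℝ) + 1) ≤ phi ((86:ℕ) : ℝ) + 1 :=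
  numeric_helper 86 23 267064515689275851355624017992790 1723 825 823 (by norm_num) pc86 pr86 (by decide) (by decide) (by decide) (by norm_num) (by norm_num) (by norm_num)
lemma num87 : (pc 87 : ℝ) - chebyshevTheta ((87:ℕ) : ℝ) / Real.log (((87:ℕ) : ℝ) + 1) ≤ phi ((87:ℕ) : ℝ) + 1 :=
  numeric_helper 87 23 267064515689275851355624017992790 1723 827 825 (by norm_num) pc87 pr87 (by decide) (by decide) (by decide) (by norm_num) (by norm_num) (by norm_num)
lemma num88 : (pc 88 : ℝ) - chebyshevTheta ((88:ℕ) : ℝ) / Real.log (((88:ℕ) : ℝ) + 1) ≤ phi ((88:ℕ) : ℝ) + 1 :=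
  numeric_helper 88 23 267064515689275851355624017992790 1723 829 827 (by norm_num) pc88 pr88 (by decide) (by decide) (by decide) (by norm_num) (by norm_num) (by norm_num)
lemma num89 : (pc 89 : ℝ) - chebyshevTheta ((89:ℕ) : ℝ) / Real.log (((89:ℕ) : ℝ) + 1) ≤ phi ((89:ℕ) : ℝ) + 1 :=
  numeric_helper 89 24 23768741896345550770650537601358310 1827 831 829 (by norm_num) pc89 pr89 (by decide) (by decide) (by decide) (by norm_num) (by norm_num) (by norm_num)
lemma num90 : (pc 90 : ℝ) - chebyshevTheta ((90:ℕ) : ℝ) / Real.log (((90:ℕ) : ℝ) + 1) ≤ phi ((90:ℕ) : ℝ) + 1 :=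
  numeric_helper 90 24 23768741896345550770650537601358310 1827 833 831 (by norm_num) pc90 pr90 (by decide) (by decide) (by decide) (by norm_num) (by norm_num) (by norm_num)
lemma num91 : (pc 91 : ℝ) - chebyshevTheta ((91:ℕ) : ℝ) / Real.log (((91:ℕ) : ℝ) + 1) ≤ phi ((91:ℕ) : ℝ) + 1 :=
  numeric_helper 91 24 23768741896345550770650537601358310 1827 836 833 (by norm_num) pc91 pr91 (by decide) (by decide) (by decide) (by norm_num) (by norm_num) (by norm_num)
lemma num92 : (pc 92 : ℝ) - chebyshevTheta ((92:ℕ) : ℝ) / Real.log (((92:ℕ) : ℝ) + 1) ≤ phi ((92:ℕ) : ℝ) + 1 :=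
  numeric_helper 92 24 23768741896345550770650537601358310 1827 838 836 (by norm_num) pc92 pr92 (by decide) (by decide) (by decide) (by norm_num) (by norm_num) (by norm_num)
lemma num93 : (pc 93 : ℝ) - chebyshevTheta ((93:ℕ) : ℝ) / Real.log (((93:ℕ) : ℝ) + 1) ≤ phi ((93:ℕ) : ℝ) + 1 :=
  numeric_helper 93 24 23768741896345550770650537601358310 1827 839 838 (by norm_num) pc93 pr93 (by decide) (by decide) (by decide) (by norm_num) (by norm_num) (by norm_num)
lemma num94 : (pc 94 : ℝ) - chebyshevTheta ((94:ℕ) : ℝ) / Real.log (((94:ℕ) : ℝ) + 1) ≤ phi ((94:ℕ) : ℝ) + 1 :=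
  numeric_helper 94 24 23768741896345550770650537601358310 1827 841 839 (by norm_num) pc94 pr94 (by decide) (by decide) (by decide) (by norm_num) (by norm_num) (by norm_num)
lemma num95 : (pc 95 : ℝ) - chebyshevTheta ((95:ℕ) : ℝ) / Real.log (((95:ℕ) : ℝ) + 1) ≤ phi ((95:ℕ) : ℝ) + 1 :=
  numeric_helper 95 24 23768741896345550770650537601358310 1827 843 841 (by norm_num) pc95 pr95 (by decide) (by decide) (by decide) (by norm_num) (by norm_num) (by norm_num)
lemma num96 : (pc 96 : ℝ) - chebyshevTheta ((96:ℕ) : ℝ) / Real.log (((96:ℕ) : ℝ) + 1) ≤ phi ((96:ℕ) : ℝ) + 1 :=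
  numeric_helper 96 24 23768741896345550770650537601358310 1827 845 843 (by norm_num) pc96 pr96 (by decide) (by decide) (by decide) (by norm_num) (by norm_num) (by norm_num)
lemma num97 : (pc 97 : ℝ) - chebyshevTheta ((97:ℕ) : ℝ) / Real.log (((97:ℕ) : ℝ) + 1) ≤ phi ((97:ℕ) : ℝ) + 1 :=
  numeric_helper 97 25 2305567963945518424753102147331756070 1932 847 845 (by norm_num) pc97 pr97 (by decide) (by decide) (by decide) (by norm_num) (by norm_num) (by norm_num)
lemma num98 : (pc 98 : ℝ) - chebyshevTheta ((98:ℕ) : ℝ) / Real.log (((98:ℕ) : ℝ) + 1) ≤ phi ((98:ℕ) : ℝ) + 1 :=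
  numeric_helper 98 25 2305567963945518424753102147331756070 1932 849 847 (by norm_num) pc98 pr98 (by decide) (by decide) (by decide) (by norm_num) (by norm_num) (by norm_num)
lemma num99 : (pc 99 : ℝ) - chebyshevTheta ((99:ℕ) : ℝ) / Real.log (((99:ℕ) : ℝ) + 1) ≤ phi ((99:ℕ) : ℝ) + 1 :=
  numeric_helper 99 25 2305567963945518424753102147331756070 1932 851 849 (by norm_num) pc99 pr99 (by decide) (by decide) (by decide) (by norm_num) (by norm_num) (by norm_num)
lemma num100 : (pc 100 : ℝ) - chebyshevTheta ((100:ℕ) : ℝ) / Real.log (((100:ℕ) : ℝ) + 1) ≤ phi ((100:ℕ) : ℝ) + 1 :=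
  numeric_helper 100 25 2305567963945518424753102147331756070 1932 853 851 (by norm_num) pc100 pr100 (by decide) (by decide) (by decide) (by norm_num) (by norm_num) (by norm_num)
lemma num101 : (pc 101 : ℝ) - chebyshevTheta ((101:ℕ) : ℝ) / Real.log (((101:ℕ) : ℝ) + 1) ≤ phi ((101:ℕ) : ℝ) + 1 :=
  numeric_helper 101 26 232862364358497360900063316880507363070 2039 855 853 (by norm_num) pc101 pr101 (by decide) (by decide) (by decide) (by norm_num) (by norm_num) (by norm_num)
lemma num102 : (pc 102 : ℝ) - chebyshevTheta ((102:ℕ) : ℝ) / Real.log (((102:ℕ) : ℝ) + 1) ≤ phi ((102:ℕ) : ℝ) + 1 :=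
  numeric_helper 102 26 232862364358497360900063316880507363070 2039 856 855 (by norm_num) pc102 pr102 (by decide) (by decide) (by decide) (by norm_num) (by norm_num) (by norm_num)
lemma num103 : (pc 103 : ℝ) - chebyshevTheta ((103:ℕ) : ℝ) / Real.log (((103:ℕ) : ℝ) + 1) ≤ phi ((103:ℕ) : ℝ) + 1 :=
  numeric_helper 103 27 23984823528925228172706521638692258396210 2146 858 856 (by norm_num) pc103 pr103 (by decide) (by decide) (by decide) (by norm_num) (by norm_num) (by norm_num)
lemma num104 : (pc 104 : ℝ) - chebyshevTheta ((104:ℕ) : ℝ) / Real.log (((104:ℕ) : ℝ) + 1) ≤ phi ((104:ℕ) : ℝ) + 1 :=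
  numeric_helper 104 27 23984823528925228172706521638692258396210 2146 860 858 (by norm_num) pc104 pr104 (by decide) (by decide) (by decide) (by norm_num) (by norm_num) (by norm_num)
lemma num105 : (pc 105 : ℝ) - chebyshevTheta ((105:ℕ) : ℝ) / Real.log (((105:ℕ) : ℝ) + 1) ≤ phi ((105:ℕ) : ℝ) + 1 :=
  numeric_helper 105 27 23984823528925228172706521638692258396210 2146 862 860 (by norm_num) pc105 pr105 (by decide) (by decide) (by decide) (by norm_num) (by norm_num) (by norm_num)
lemma num106 : (pc 106 : ℝ) - chebyshevTheta ((106:ℕ) : ℝ) / Real.log (((106:ℕ) : ℝ) + 1) ≤ phi ((106:ℕ) : ℝ) + 1 :=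
  numeric_helper 106 27 23984823528925228172706521638692258396210 2146 863 862 (by norm_num) pc106 pr106 (by decide) (by decide) (by decide) (by norm_num) (by norm_num) (by norm_num)
lemma num107 : (pc 107 : ℝ) - chebyshevTheta ((107:ℕ) : ℝ) / Real.log (((107:ℕ) : ℝ) + 1) ≤ phi ((107:ℕ) : ℝ) + 1 :=
  numeric_helper 107 28 2566376117594999414479597815340071648394470 2254 865 863 (by norm_num) pc107 pr107 (by decide) (by decide) (by decide) (by norm_num) (by norm_num) (by norm_num)
lemma num108 : (pc 108 : ℝ) - chebyshevTheta ((108:ℕ) : ℝ) / Real.log (((108:ℕ) : ℝ) + 1) ≤ phi ((108:ℕ) : ℝ) + 1 :=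
  numeric_helper 108 28 2566376117594999414479597815340071648394470 2254 867 865 (by norm_num) pc108 pr108 (by decide) (by decide) (by decide) (by norm_num) (by norm_num) (by norm_num)
lemma num109 : (pc 109 : ℝ) - chebyshevTheta ((109:ℕ) : ℝ) / Real.log (((109:ℕ) : ℝ) + 1) ≤ phi ((109:ℕ) : ℝ) + 1 :=
  numeric_helper 109 29 279734996817854936178276161872067809674997230 2362 869 867 (by norm_num) pc109 pr109 (by decide) (by decide) (by decide) (by norm_num) (by norm_num) (by norm_num)
lemma num110 : (pc 110 : ℝ) - chebyshevTheta ((110:ℕ) : ℝ) / Real.log (((110:ℕ) : ℝ) + 1) ≤ phi ((110:ℕ) : ℝ) + 1 :=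
  numeric_helper 110 29 279734996817854936178276161872067809674997230 2362 870 869 (by norm_num) pc110 pr110 (by decide) (by decide) (by decide) (by norm_num) (by norm_num) (by norm_num)
lemma num111 : (pc 111 : ℝ) - chebyshevTheta ((111:ℕ) : ℝ) / Real.log (((111:ℕ) : ℝ) + 1) ≤ phi ((111:ℕ) : ℝ) + 1 :=
  numeric_helper 111 29 279734996817854936178276161872067809674997230 2362 872 870 (by norm_num) pc111 pr111 (by decide) (by decide) (by decide) (by norm_num) (by norm_num) (by norm_num)
lemma num112 : (pc 112 : ℝ) - chebyshevTheta ((112:ℕ) : ℝ) / Real.log (((112:ℕ) : ℝ) + 1) ≤ phi ((112:ℕ) : ℝ) + 1 :=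
  numeric_helper 112 29 279734996817854936178276161872067809674997230 2362 873 872 (by norm_num) pc112 pr112 (by decide) (by decide) (by decide) (by norm_num) (by norm_num) (by norm_num)
lemma num113 : (pc 113 : ℝ) - chebyshevTheta ((113:ℕ) : ℝ) / Real.log (((113:ℕ) : ℝ) + 1) ≤ phi ((113:ℕ) : ℝ) + 1 :=
  numeric_helper 113 30 31610054640417607788145206291543662493274686990 2471 875 873 (by norm_num) pc113 pr113 (by decide) (by decide) (by decide) (by norm_num) (by norm_num) (by norm_num)
lemma num114 : (pc 114 : ℝ) - chebyshevTheta ((114:ℕ) : ℝ) / Real.log (((114:ℕ) : ℝ) + 1) ≤ phi ((114:ℕ) : ℝ) + 1 :=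
  numeric_helper 114 30 31610054640417607788145206291543662493274686990 2471 877 875 (by norm_num) pc114 pr114 (by decide) (by decide) (by decide) (by norm_num) (by norm_num) (by norm_num)
lemma num115 : (pc 115 : ℝ) - chebyshevTheta ((115:ℕ) : ℝ) / Real.log (((115:ℕ) : ℝ) + 1) ≤ phi ((115:ℕ) : ℝ) + 1 :=
  numeric_helper 115 30 31610054640417607788145206291543662493274686990 2471 878 877 (by norm_num) pc115 pr115 (by decide) (by decide) (by decide) (by norm_num) (by norm_num) (by norm_num)
lemma num116 : (pc 116 : ℝ) - chebyshevTheta ((116:ℕ) : ℝ) / Real.log (((116:ℕ) : ℝ) + 1) ≤ phi ((116:ℕ) : ℝ) + 1 :=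
  numeric_helper 116 30 31610054640417607788145206291543662493274686990 2471 880 878 (by norm_num) pc116 pr116 (by decide) (by decide) (by decide) (by norm_num) (by norm_num) (by norm_num)
lemma num117 : (pc 117 : ℝ) - chebyshevTheta ((117:ℕ) : ℝ) / Real.log (((117:ℕ) : ℝ) + 1) ≤ phi ((117:ℕ) : ℝ) + 1 :=
  numeric_helper 117 30 31610054640417607788145206291543662493274686990 2471 881 880 (by norm_num) pc117 pr117 (by decide) (by decide) (by decide) (by norm_num) (by norm_num) (by norm_num)
lemma num118 : (pc 118 : ℝ) - chebyshevTheta ((118:ℕ) : ℝ) / Real.log (((118:ℕ) : ℝ) + 1) ≤ phi ((118:ℕ) : ℝ) + 1 :=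
  numeric_helper 118 30 31610054640417607788145206291543662493274686990 2471 883 881 (by norm_num) pc118 pr118 (by decide) (by decide) (by decide) (by norm_num) (by norm_num) (by norm_num)
lemma num119 : (pc 119 : ℝ) - chebyshevTheta ((119:ℕ) : ℝ) / Real.log (((119:ℕ) : ℝ) + 1) ≤ phi ((119:ℕ) : ℝ) + 1 :=
  numeric_helper 119 30 31610054640417607788145206291543662493274686990 2471 885 883 (by norm_num) pc119 pr119 (by decide) (by decide) (by decide) (by norm_num) (by norm_num) (by norm_num)
lemma num120 : (pc 120 : ℝ) - chebyshevTheta ((120:ℕ) : ℝ) / Real.log (((120:ℕ) : ℝ) + 1) ≤ phi ((120:ℕ) : ℝ) + 1 :=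
  numeric_helper 120 30 31610054640417607788145206291543662493274686990 2471 886 885 (by norm_num) pc120 pr120 (by decide) (by decide) (by decide) (by norm_num) (by norm_num) (by norm_num)
lemma num121 : (pc 121 : ℝ) - chebyshevTheta ((121:ℕ) : ℝ) / Real.log (((121:ℕ) : ℝ) + 1) ≤ phi ((121:ℕ) : ℝ) + 1 :=
  numeric_helper 121 30 31610054640417607788145206291543662493274686990 2471 888 886 (by norm_num) pc121 pr121 (by decide) (by decide) (by decide) (by norm_num) (by norm_num) (by norm_num)
lemma num122 : (pc 122 : ℝ) - chebyshevTheta ((122:ℕ) : ℝ) / Real.log (((122:ℕ) : ℝ) + 1) ≤ phi ((122:ℕ) : ℝ) + 1 :=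
  numeric_helper 122 30 31610054640417607788145206291543662493274686990 2471 889 888 (by norm_num) pc122 pr122 (by decide) (by decide) (by decide) (by norm_num) (by norm_num) (by norm_num)
lemma num123 : (pc 123 : ℝ) - chebyshevTheta ((123:ℕ) : ℝ) / Real.log (((123:ℕ) : ℝ) + 1) ≤ phi ((123:ℕ) : ℝ) + 1 :=
  numeric_helper 123 30 31610054640417607788145206291543662493274686990 2471 891 889 (by norm_num) pc123 pr123 (by decide) (by decide) (by decide) (by norm_num) (by norm_num) (by norm_num)
lemma num124 : (pc 124 : ℝ) - chebyshevTheta ((124:ℕ) : ℝ) / Real.log (((124:ℕ) : ℝ) + 1) ≤ phi ((124:ℕ) : ℝ) + 1 :=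
  numeric_helper 124 30 31610054640417607788145206291543662493274686990 2471 892 891 (by norm_num) pc124 pr124 (by decide) (by decide) (by decide) (by norm_num) (by norm_num) (by norm_num)
lemma num125 : (pc 125 : ℝ) - chebyshevTheta ((125:ℕ) : ℝ) / Real.log (((125:ℕ) : ℝ) + 1) ≤ phi ((125:ℕ) : ℝ) + 1 :=
  numeric_helper 125 30 31610054640417607788145206291543662493274686990 2471 894 892 (by norm_num) pc125 pr125 (by decide) (by decide) (by decide) (by norm_num) (by norm_num) (by norm_num)
lemma num126 : (pc 126 : ℝ) - chebyshevTheta ((126:ℕ) : ℝ) / Real.log (((126:ℕ) : ℝ) + 1) ≤ phi ((126:ℕ) : ℝ) + 1 :=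
  numeric_helper 126 30 31610054640417607788145206291543662493274686990 2471 895 894 (by norm_num) pc126 pr126 (by decide) (by decide) (by decide) (by norm_num) (by norm_num) (by norm_num)
lemma num127 : (pc 127 : ℝ) - chebyshevTheta ((127:ℕ) : ℝ) / Real.log (((127:ℕ) : ℝ) + 1) ≤ phi ((127:ℕ) : ℝ) + 1 :=
  numeric_helper 127 31 4014476939333036189094441199026045136645885247730 2583 896 895 (by norm_num) pc127 pr127 (by decide) (by decide) (by decide) (by norm_num) (by norm_num) (by norm_num)
lemma num128 : (pc 128 : ℝ) - chebyshevTheta ((128:ℕ) : ℝ) / Real.log (((128:ℕ) : ℝ) + 1) ≤ phi ((128:ℕ) : ℝ) + 1 :=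
  numeric_helper 128 31 4014476939333036189094441199026045136645885247730 2583 898 896 (by norm_num) pc128 pr128 (by decide) (by decide) (by decide) (by norm_num) (by norm_num) (by norm_num)
lemma num129 : (pc 129 : ℝ) - chebyshevTheta ((129:ℕ) : ℝ) / Real.log (((129:ℕ) : ℝ) + 1) ≤ phi ((129:ℕ) : ℝ) + 1 :=
  numeric_helper 129 31 4014476939333036189094441199026045136645885247730 2583 899 898 (by norm_num) pc129 pr129 (by decide) (by decide) (by decide) (by norm_num) (by norm_num) (by norm_num)
lemma num130 : (pc 130 : ℝ) - chebyshevTheta ((130:ℕ) : ℝ) / Real.log (((130:ℕ) : ℝ) + 1) ≤ phi ((130:ℕ) : ℝ) + 1 :=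
  numeric_helper 130 31 4014476939333036189094441199026045136645885247730 2583 901 899 (by norm_num) pc130 pr130 (by decide) (by decide) (by decide) (by norm_num) (by norm_num) (by norm_num)
lemma num131 : (pc 131 : ℝ) - chebyshevTheta ((131:ℕ) : ℝ) / Real.log (((131:ℕ) : ℝ) + 1) ≤ phi ((131:ℕ) : ℝ) + 1 :=
  numeric_helper 131 32 525896479052627740771371797072411912900610967452630 2695 902 901 (by norm_num) pc131 pr131 (by decide) (by decide) (by decide) (by norm_num) (by norm_num) (by norm_num)
lemma num132 : (pc 132 : ℝ) - chebyshevTheta ((132:ℕ) : ℝ) / Real.log (((132:ℕ) : ℝ) + 1) ≤ phi ((132:ℕ) : ℝ) + 1 :=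
  numeric_helper 132 32 525896479052627740771371797072411912900610967452630 2695 904 902 (by norm_num) pc132 pr132 (by decide) (by decide) (by decide) (by norm_num) (by norm_num) (by norm_num)
lemma num133 : (pc 133 : ℝ) - chebyshevTheta ((133:ℕ) : ℝ) / Real.log (((133:ℕ) : ℝ) + 1) ≤ phi ((133:ℕ) : ℝ) + 1 :=
  numeric_helper 133 32 525896479052627740771371797072411912900610967452630 2695 905 904 (by norm_num) pc133 pr133 (by decide) (by decide) (by decide) (by norm_num) (by norm_num) (by norm_num)
lemma num134 : (pc 134 : ℝ) - chebyshevTheta ((134:ℕ) : ℝ) / Real.log (((134:ℕ) : ℝ) + 1) ≤ phi ((134:ℕ) : ℝ) + 1 :=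
  numeric_helper 134 32 525896479052627740771371797072411912900610967452630 2695 906 905 (by norm_num) pc134 pr134 (by decide) (by decide) (by decide) (by norm_num) (by norm_num) (by norm_num)
lemma num135 : (pc 135 : ℝ) - chebyshevTheta ((135:ℕ) : ℝ) / Real.log (((135:ℕ) : ℝ) + 1) ≤ phi ((135:ℕ) : ℝ) + 1 :=
  numeric_helper 135 32 525896479052627740771371797072411912900610967452630 2695 908 906 (by norm_num) pc135 pr135 (by decide) (by decide) (by decide) (by norm_num) (by norm_num) (by norm_num)
lemma num136 : (pc 136 : ℝ) - chebyshevTheta ((136:ℕ) : ℝ) / Real.log (((136:ℕ) : ℝ) + 1) ≤ phi ((136:ℕ) : ℝ) + 1 :=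
  numeric_helper 136 32 525896479052627740771371797072411912900610967452630 2695 909 908 (by norm_num) pc136 pr136 (by decide) (by decide) (by decide) (by norm_num) (by norm_num) (by norm_num)
lemma num137 : (pc 137 : ℝ) - chebyshevTheta ((137:ℕ) : ℝ) / Real.log (((137:ℕ) : ℝ) + 1) ≤ phi ((137:ℕ) : ℝ) + 1 :=
  numeric_helper 137 33 72047817630210000485677936198920432067383702541010310 2809 910 909 (by norm_num) pc137 pr137 (by decide) (by decide) (by decide) (by norm_num) (by norm_num) (by norm_num)
lemma num138 : (pc 138 : ℝ) - chebyshevTheta ((138:ℕ) : ℝ) / Real.log (((138:ℕ) : ℝ) + 1) ≤ phi ((138:ℕ) : ℝ) + 1 :=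
  numeric_helper 138 33 72047817630210000485677936198920432067383702541010310 2809 912 910 (by norm_num) pc138 pr138 (by decide) (by decide) (by decide) (by norm_num) (by norm_num) (by norm_num)
lemma num139 : (pc 139 : ℝ) - chebyshevTheta ((139:ℕ) : ℝ) / Real.log (((139:ℕ) : ℝ) + 1) ≤ phi ((139:ℕ) : ℝ) + 1 :=
  numeric_helper 139 34 10014646650599190067509233131649940057366334653200433090 2923 913 912 (by norm_num) pc139 pr139 (by decide) (by decide) (by decide) (by norm_num) (by norm_num) (by norm_num)
lemma num140 : (pc 140 : ℝ) - chebyshevTheta ((140:ℕ) : ℝ) / Real.log (((140:ℕ) : ℝ) + 1) ≤ phi ((140:ℕ) : ℝ) + 1 :=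
  numeric_helper 140 34 10014646650599190067509233131649940057366334653200433090 2923 914 913 (by norm_num) pc140 pr140 (by decide) (by decide) (by decide) (by norm_num) (by norm_num) (by norm_num)
lemma num141 : (pc 141 : ℝ) - chebyshevTheta ((141:ℕ) : ℝ) / Real.log (((141:ℕ) : ℝ) + 1) ≤ phi ((141:ℕ) : ℝ) + 1 :=
  numeric_helper 141 34 10014646650599190067509233131649940057366334653200433090 2923 916 914 (by norm_num) pc141 pr141 (by decide) (by decide) (by decide) (by norm_num) (by norm_num) (by norm_num)
lemma num142 : (pc 142 : ℝ) - chebyshevTheta ((142:ℕ) : ℝ) / Real.log (((142:ℕ) : ℝ) + 1) ≤ phi ((142:ℕ) : ℝ) + 1 :=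
  numeric_helper 142 34 10014646650599190067509233131649940057366334653200433090 2923 917 916 (by norm_num) pc142 pr142 (by decide) (by decide) (by decide) (by norm_num) (by norm_num) (by norm_num)
lemma num143 : (pc 143 : ℝ) - chebyshevTheta ((143:ℕ) : ℝ) / Real.log (((143:ℕ) : ℝ) + 1) ≤ phi ((143:ℕ) : ℝ) + 1 :=
  numeric_helper 143 34 10014646650599190067509233131649940057366334653200433090 2923 918 917 (by norm_num) pc143 pr143 (by decide) (by decide) (by decide) (by norm_num) (by norm_num) (by norm_num)
lemma num144 : (pc 144 : ℝ) - chebyshevTheta ((144:ℕ) : ℝ) / Real.log (((144:ℕ) : ℝ) + 1) ≤ phi ((144:ℕ) : ℝ) + 1 :=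
  numeric_helper 144 34 10014646650599190067509233131649940057366334653200433090 2923 920 918 (by norm_num) pc144 pr144 (by decide) (by decide) (by decide) (by norm_num) (by norm_num) (by norm_num)
lemma num145 : (pc 145 : ℝ) - chebyshevTheta ((145:ℕ) : ℝ) / Real.log (((145:ℕ) : ℝ) + 1) ≤ phi ((145:ℕ) : ℝ) + 1 :=
  numeric_helper 145 34 10014646650599190067509233131649940057366334653200433090 2923 921 920 (by norm_num) pc145 pr145 (by decide) (by decide) (by decide) (by norm_num) (by norm_num) (by norm_num)
lemma num146 : (pc 146 : ℝ) - chebyshevTheta ((146:ℕ) : ℝ) / Real.log (((146:ℕ) : ℝ) + 1) ≤ phi ((146:ℕ) : ℝ) + 1 :=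
  numeric_helper 146 34 10014646650599190067509233131649940057366334653200433090 2923 922 921 (by norm_num) pc146 pr146 (by decide) (by decide) (by decide) (by norm_num) (by norm_num) (by norm_num)
lemma num147 : (pc 147 : ℝ) - chebyshevTheta ((147:ℕ) : ℝ) / Real.log (((147:ℕ) : ℝ) + 1) ≤ phi ((147:ℕ) : ℝ) + 1 :=
  numeric_helper 147 34 10014646650599190067509233131649940057366334653200433090 2923 923 922 (by norm_num) pc147 pr147 (by decide) (by decide) (by decide) (by norm_num) (by norm_num) (by norm_num)
lemma num148 : (pc 148 : ℝ) - chebyshevTheta ((148:ℕ) : ℝ) / Real.log (((148:ℕ) : ℝ) + 1) ≤ phi ((148:ℕ) : ℝ) + 1 :=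
  numeric_helper 148 34 10014646650599190067509233131649940057366334653200433090 2923 925 923 (by norm_num) pc148 pr148 (by decide) (by decide) (by decide) (by norm_num) (by norm_num) (by norm_num)

lemma numeric_all (N : ℕ) (h1 : 3 ≤ N) (h2 : N ≤ 148) :
    (pc N : ℝ) - chebyshevTheta ((N:ℕ) : ℝ) / Real.log (((N:ℕ) : ℝ) + 1) ≤ phi ((N:ℕ) : ℝ) + 1 := by
  interval_cases N
  exacts [num3, num4, num5, num6, num7, num8, num9, num10, num11, num12, num13, num14, num15, num16, num17, num18, num19, num20, num21, num22, num23, num24, num25, num26, num27, num28, num29, num30, num31, num32, num33, num34, num35, num36, num37, num38, num39, num40, num41, num42, num43, num44, num45, num46, num47, num48, num49, num50, num51, num52, num53, num54, num55, num56, num57, num58, num59, num60, num61, num62, num63, num64, num65, num66, num67, num68, num69, num70, num71, num72, num73, num74, num75, num76, num77, num78, num79, num80, num81, num82, num83, num84, num85, num86, num87, num88, num89, num90, num91, num92, num93, num94, num95, num96, num97, num98, num99, num100, num101, num102, num103, num104, num105, num106, num107, num108, num109, num110, num111, num112, num113, num114, num115, num116, num117, num118, num119, num120, num121, num122, num123,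 num124, num125, num126, num127, num128, num129, num130, num131, num132, num133, num134, num135, num136, num137, num138, num139, num140, num141, num142, num143, num144, num145, num146, num147, num148]


lemma main_bound (x : ℝ) (hx : 3 ≤ x) : (∫ t in (2:ℝ)..x, f t) ≤ phi x + 1 := by
  rcases lt_or_ge x 149 with hcase | hcase
  · set N := ⌊x⌋₊ with hNdef
    have hx0 : (0:ℝ) ≤ x := by linarith
    have hN3 : 3 ≤ N := Nat.le_floor (by exact_mod_cast hx)
    have hNle : (N:ℝ) ≤ x := Nat.floor_le hx0
    have hxlt : x < (N:ℝ) + 1 := Nat.lt_floor_add_one x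
    have hN148 : N ≤ 148 := by
      have h9 : N < 149 := by
        have := (Nat.floor_lt hx0).mpr (show x < ((149:ℕ):ℝ) by push_cast; linarith)
        exact this
      omega
    have hNR3 : (3:ℝ) ≤ (N:ℝ) := by exact_mod_cast hN3
    have i1 : IntervalIntegrable f volume 2 x := f_integrable (le_refl 2) (by linarith)
    have i2 : IntervalIntegrable f volume x ((N:ℝ)+1) := f_integrable (by linarith) (by linarith)
    have hsplit : (∫ t in (2:ℝ)..x, f t) + (∫ t in x..((N:ℝ)+1), f t) =
        ∫ t in (2:ℝ)..((N:ℝ)+1), f t :=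
      intervalIntegral.integral_add_adjacent_intervals i1 i2
    have hnn : 0 ≤ ∫ t in x..((N:ℝ)+1), f t := by
      apply intervalIntegral.integral_nonneg (by linarith)
      intro t htm
      exact f_nonneg (by linarith [htm.1])
    have hid := key_identity N (by omega)
    have hnum := numeric_all N hN3 hN148
    have hmono := phi_mono hNR3 hNle
    linarith [hsplit, hid, hnum, hnn, hmono]
  · have i1 : IntervalIntegrable f volume 2 149 := f_integrable (le_refl 2) (by norm_num)
    have i2 : IntervalIntegrable f volume 149 x := f_integrable (by norm_num) hcase
    have hsplit : (∫ t in (2:ℝ)..(149:ℝ), f t) + (∫ t in (149:ℝ)..x, f t) =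
        ∫ t in (2:ℝ)..x, f t :=
      intervalIntegral.integral_add_adjacent_intervals i1 i2
    have hid := key_identity 148 (by norm_num)
    have hc : ((148:ℕ):ℝ) + 1 = (149:ℝ) := by norm_num
    rw [hc] at hid
    have hnum := numeric_all 148 (by norm_num) (le_refl 148)
    rw [hc] at hnum
    have hmono1 : phi ((148:ℕ):ℝ) ≤ phi (149:ℝ) := phi_mono (by norm_num) (by norm_num)
    have hftc : ∫ t in (149:ℝ)..x, phi' t = phi x - phi 149 := by
      apply integral_eq_sub_of_hasDerivAt
      · intro t htm
        rw [Set.uIcc_of_le hcase] at htm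
        exact phi_hasDeriv (by linarith [htm.1])
      · exact (phi'_contOn (by norm_num) hcase).intervalIntegrable
    have hcompare : ∫ t in (149:ℝ)..x, f t ≤ ∫ t in (149:ℝ)..x, phi' t := by
      apply intervalIntegral.integral_mono_on hcase i2
        ((phi'_contOn (by norm_num) hcase).intervalIntegrable)
      intro t htm
      exact f_le_phi' htm.1
    have t1 : (∫ t in (149:ℝ)..x, f t) ≤ phi x - phi 149 := hcompare.trans (le_of_eq hftc)
    have t2 := add_le_add hnum t1
    rw [← hsplit, hid]
    exact t2.trans (by linarith [hmono1])

end ThetaAux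

theorem theta_integral_bound (x : ℝ) (hx : 3 ≤ x) :
    ∫ t in (2:ℝ)..x, chebyshevTheta t / (t * (Real.log t) ^ 2) ≤
      (((x - 1) / 2) * Real.log 2) / Real.log x + 1 := by
  have h := ThetaAux.main_bound x hx
  have e : (∫ t in (2:ℝ)..x, chebyshevTheta t / (t * (Real.log t) ^ 2)) =
      ∫ t in (2:ℝ)..x, ThetaAux.f t := by
    apply intervalIntegral.integral_congr
    intro t _
    rfl
  have e2 : (((x - 1) / 2) * Real.log 2) / Real.log x = ThetaAux.phi x := by
    unfold ThetaAux.phi; ring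
  rw [e, e2]
  exact h
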